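/- arXiv:math/0109093 — 3 statements merged into one kernel-verified Lean document; each statement's English description precedes it below -/
import Mathlib

section
/- Let p, q ≥ 1 and let λ = (λ_1, …, λ_p) be a partition (parts possibly zero) contained in the rectangle p×q. Then the product of all hook lengths of the rectangular shape p×q satisfies H_{p×q} = (−1)^{|λ|} · H_λ · H_{λ̃} · s_λ(1^p) · s_λ(1^{−q}), where λ̃ is the complementary partition defined by λ̃_i = q − λ_{p+1−i}. -/
/-- The `j`-th part (0-indexed) of the conjugate of the partition whose parts are
listed by `L`. -/
def conjPart (L : List ℕ) (j : ℕ) : ℕ :=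
  ((List.range L.length).filter (fun i => j < L.getD i 0)).length

/-- The hook length of the (0-indexed) cell `(i,j)` of the partition listed by `L`:
`λ_i + λ'_j - i - j - 1` (0-indexed version of `λ_i + λ'_j - i - j + 1`). -/
def hookLen (L : List ℕ) (i j : ℕ) : ℤ :=
  (L.getD i 0 : ℤ) + (conjPart L j : ℤ) - (i : ℤ) - (j : ℤ) - 1

/-- `H_λ`: the product of all hook lengths of the partition listed by `L`. -/
def hookProd (L : List ℕ) : ℚ :=
  ∏ i ∈ Finset.range L.length, ∏ j ∈ Finset.range (L.getD i 0), (hookLen L i j : ℚ)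

/-- The principal specialization `s_λ(1^t) = ∏_{u ∈ λ} (t + c(u))/h(u)` of the Schur
function of the partition listed by `L`, where `c(u) = j - i` is the content. -/
def schurSpec (L : List ℕ) (t : ℚ) : ℚ :=
  ∏ i ∈ Finset.range L.length, ∏ j ∈ Finset.range (L.getD i 0),
    (t + ((j : ℚ) - (i : ℚ))) / (hookLen L i j : ℚ)


lemma conjPart_eq_card (L : List ℕ) (j : ℕ) :
    conjPart L j = ((Finset.range L.length).filter (fun i => j < L.getD i 0)).card := rfl

lemma conjPart_le (L : List ℕ) (j : ℕ) : conjPart L j ≤ L.length := by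
  rw [conjPart_eq_card]
  exact le_trans (Finset.card_filter_le _ _) (by simp)

lemma conjPart_anti (L : List ℕ) {j j' : ℕ} (h : j ≤ j') : conjPart L j' ≤ conjPart L j := by
  rw [conjPart_eq_card, conjPart_eq_card]
  apply Finset.card_le_card
  intro i hi
  simp only [Finset.mem_filter, Finset.mem_range] at hi ⊢
  omega

lemma sorted_getD (L : List ℕ) (hs : L.Pairwise (· ≥ ·)) {i j : ℕ} (h : i ≤ j) :
    L.getD j 0 ≤ L.getD i 0 := by
  rcases eq_or_lt_of_le h with rfl | hlt
  · exact le_refl _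
  by_cases hj : j < L.length
  · have hi : i < L.length := lt_trans hlt hj
    rw [List.getD_eq_getElem _ _ hj, List.getD_eq_getElem _ _ hi]
    exact List.Pairwise.rel_get_of_lt hs (by exact hlt)
  · rw [List.getD_eq_default _ _ (not_lt.1 hj)]
    exact Nat.zero_le _

lemma conjPart_lower (L : List ℕ) (hs : L.Pairwise (· ≥ ·)) {i j : ℕ} (hi : i < L.length)
    (hj : j < L.getD i 0) : i + 1 ≤ conjPart L j := by
  rw [conjPart_eq_card]
  have : Finset.range (i+1) ⊆ (Finset.range L.length).filter (fun k => j < L.getD k 0) := by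
    intro k hk
    simp only [Finset.mem_range] at hk
    simp only [Finset.mem_filter, Finset.mem_range]
    constructor
    · omega
    · exact lt_of_lt_of_le hj (sorted_getD L hs (by omega))
  simpa using Finset.card_le_card this

lemma conjPart_upper (L : List ℕ) (hs : L.Pairwise (· ≥ ·)) {i j : ℕ}
    (hj : L.getD i 0 ≤ j) : conjPart L j ≤ i := by
  rw [conjPart_eq_card]
  have : (Finset.range L.length).filter (fun k => j < L.getD k 0) ⊆ Finset.range i := by
    intro k hk
    simp only [Finset.mem_filter, Finset.mem_range] at hk
    simp only [Finset.mem_range]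
    by_contra hki
    push_neg at hki
    have : L.getD k 0 ≤ L.getD i 0 := sorted_getD L hs hki
    omega
  simpa using Finset.card_le_card this

lemma conjPart_cons (a : ℕ) (M : List ℕ) (j : ℕ) :
    conjPart (a :: M) j = (if j < a then 1 else 0) + conjPart M j := by
  rw [conjPart_eq_card, conjPart_eq_card, Finset.card_filter, Finset.card_filter]
  rw [List.length_cons, Finset.sum_range_succ']
  simp only [List.getD_cons_succ, List.getD_cons_zero]
  omega




/-- `β_i = λ_i + (p-1-i)`. -/
def betaN (L : List ℕ) (i : ℕ) : ℕ := L.getD i 0 + (L.length - 1 - i)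

def vand (L : List ℕ) : ℚ :=
  ∏ i ∈ Finset.range L.length, ∏ j ∈ Finset.range i, ((betaN L j : ℚ) - (betaN L i : ℚ))

lemma hookLen_ge_one (L : List ℕ) (hs : L.Pairwise (· ≥ ·)) {i j : ℕ} (hi : i < L.length)
    (hj : j < L.getD i 0) : 1 ≤ hookLen L i j := by
  have h1 := conjPart_lower L hs hi hj
  unfold hookLen
  push_cast
  omega

lemma hookLen_pos_cast (L : List ℕ) (hs : L.Pairwise (· ≥ ·)) {i j : ℕ} (hi : i < L.length)
    (hj : j < L.getD i 0) : (0 : ℚ) < (hookLen L i j : ℚ) := by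
  have := hookLen_ge_one L hs hi hj
  exact_mod_cast lt_of_lt_of_le zero_lt_one (by exact_mod_cast this)

/-- the natural-number value of a first-row hook. -/
lemma hookLen_zero_eq (L : List ℕ) {j : ℕ} (hj : j < L.getD 0 0) :
    hookLen L 0 j = ((L.getD 0 0 - 1 - j) + conjPart L j : ℤ) := by
  unfold hookLen
  push_cast
  omega

/-- **Lemma A**: first-row hooks together with first-row beta differences fill `{1,…,β₀}`. -/
lemma lemmaA (L : List ℕ) (hs : L.Pairwise (· ≥ ·)) (hne : L ≠ []) :
    ((∏ j ∈ Finset.range (L.getD 0 0), (hookLen L 0 j : ℚ)) *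
      ∏ k ∈ Finset.range (L.length - 1), ((betaN L 0 : ℚ) - (betaN L (k+1) : ℚ)))
      = (Nat.factorial (betaN L 0) : ℚ) := by
  have hlen : 1 ≤ L.length := List.length_pos_iff.2 hne
  set n := L.length with hn
  set m := L.getD 0 0 with hm
  have hB : betaN L 0 = m + (n - 1) := by
    rw [hm, hn]; simp only [betaN, Nat.sub_zero]
  -- entries bounded by m
  have hentry : ∀ i, L.getD i 0 ≤ m := fun i => sorted_getD L hs (Nat.zero_le i)
  -- the two injections into ℕ
  set f : ℕ → ℕ := fun j => (m - 1 - j) + conjPart L j with hf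
  set g : ℕ → ℕ := fun k => (m - L.getD (k+1) 0) + (k+1) with hg
  -- f is strictly decreasing on range m
  have hfmono : ∀ {j j'}, j < j' → j' < m → f j' < f j := by
    intro j j' hjj hj'
    have := conjPart_anti L (le_of_lt hjj)
    simp only [hf]
    omega
  have hfinj : Set.InjOn f (Finset.range m) := by
    intro x hx y hy hxy
    simp only [Finset.coe_range, Set.mem_Iio] at hx hy
    rcases lt_trichotomy x y with h | h | h
    · exact absurd hxy (by have := hfmono h hy; omega)
    · exact h
    · exact absurd hxy (by have := hfmono h hx; omega)
  have hginj : Set.InjOn g (Finset.range (n-1)) := by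
    intro x hx y hy hxy
    simp only [Finset.coe_range, Set.mem_Iio] at hx hy
    rcases lt_trichotomy x y with h | h | h
    · have hle' : L.getD (y+1) 0 ≤ L.getD (x+1) 0 := sorted_getD L hs (by omega)
      have h1 : L.getD (x+1) 0 ≤ m := hentry _
      have h2 : L.getD (y+1) 0 ≤ m := hentry _
      simp only [hg] at hxy; omega
    · exact h
    · have hle' : L.getD (x+1) 0 ≤ L.getD (y+1) 0 := sorted_getD L hs (by omega)
      have h1 : L.getD (x+1) 0 ≤ m := hentry _
      have h2 : L.getD (y+1) 0 ≤ m := hentry _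
      simp only [hg] at hxy; omega
  -- images
  set S1 : Finset ℕ := (Finset.range m).image f with hS1
  set S2 : Finset ℕ := (Finset.range (n-1)).image g with hS2
  have hS1sub : S1 ⊆ Finset.Icc 1 (m + (n-1)) := by
    intro x hx
    simp only [hS1, Finset.mem_image, Finset.mem_range] at hx
    obtain ⟨j, hj, rfl⟩ := hx
    have h1 : 1 ≤ conjPart L j := conjPart_lower L hs (by omega) (by omega)
    have h2 : conjPart L j ≤ n := conjPart_le L j
    simp only [hf, Finset.mem_Icc]
    omega
  have hS2sub : S2 ⊆ Finset.Icc 1 (m + (n-1)) := by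
    intro x hx
    simp only [hS2, Finset.mem_image, Finset.mem_range] at hx
    obtain ⟨k, hk, rfl⟩ := hx
    have h1 : L.getD (k+1) 0 ≤ m := hentry _
    simp only [hg, Finset.mem_Icc]
    omega
  have hdisj : Disjoint S1 S2 := by
    rw [Finset.disjoint_left]
    intro x hx1 hx2
    simp only [hS1, Finset.mem_image, Finset.mem_range] at hx1
    simp only [hS2, Finset.mem_image, Finset.mem_range] at hx2
    obtain ⟨j, hj, hfj⟩ := hx1
    obtain ⟨k, hk, hgk⟩ := hx2
    have ham : L.getD (k+1) 0 ≤ m := hentry _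
    have heq0 : f j = g k := hfj.trans hgk.symm
    simp only [hf, hg] at heq0
    by_cases hcase : j < L.getD (k+1) 0
    · have h1 : (k+1) + 1 ≤ conjPart L j := conjPart_lower L hs (by omega) hcase
      omega
    · push_neg at hcase
      have h2 : conjPart L j ≤ k + 1 := conjPart_upper L hs hcase
      have h3 : 1 ≤ conjPart L j := conjPart_lower L hs (by omega) (by omega)
      omega
  have hcards : S1.card = m := by
    rw [hS1, Finset.card_image_of_injOn hfinj, Finset.card_range]
  have hcards2 : S2.card = n - 1 := by
    rw [hS2, Finset.card_image_of_injOn hginj, Finset.card_range]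
  have hunion : S1 ∪ S2 = Finset.Icc 1 (m + (n-1)) := by
    apply Finset.eq_of_subset_of_card_le (Finset.union_subset hS1sub hS2sub)
    rw [Finset.card_union_of_disjoint hdisj, hcards, hcards2, Nat.card_Icc]
    omega
  -- now compute products in ℕ
  have hprodN : (∏ j ∈ Finset.range m, f j) * (∏ k ∈ Finset.range (n-1), g k)
      = Nat.factorial (m + (n-1)) := by
    have e1 : (∏ x ∈ S1, x) = ∏ j ∈ Finset.range m, f j := Finset.prod_image hfinj
    have e2 : (∏ x ∈ S2, x) = ∏ k ∈ Finset.range (n-1), g k := Finset.prod_image hginj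
    have e3 : (∏ x ∈ S1 ∪ S2, x) = (∏ x ∈ S1, x) * ∏ x ∈ S2, x := Finset.prod_union hdisj
    rw [← e1, ← e2, ← e3, hunion, ← Finset.Ico_add_one_right_eq_Icc]
    exact Finset.prod_Ico_id_eq_factorial (m + (n-1))
  -- transfer to ℚ
  have hcast1 : ∀ j ∈ Finset.range m, (hookLen L 0 j : ℚ) = (f j : ℚ) := by
    intro j hj
    simp only [Finset.mem_range] at hj
    rw [hookLen_zero_eq L (by omega), ← hm]
    simp only [hf]
    push_cast [Nat.sub_sub, Nat.cast_sub (show 1 + j ≤ m by omega)]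
    ring
  have hcast2 : ∀ k ∈ Finset.range (n-1), ((betaN L 0 : ℚ) - (betaN L (k+1) : ℚ)) = (g k : ℚ) := by
    intro k hk
    simp only [Finset.mem_range] at hk
    have h1 : L.getD (k+1) 0 ≤ m := hentry _
    have hBk : betaN L (k+1) = L.getD (k+1) 0 + (n - 1 - (k+1)) := rfl
    rw [hB, hBk]
    simp only [hg]
    push_cast [Nat.sub_sub]
    have : k + 1 ≤ n - 1 := hk
    push_cast [Nat.cast_sub (by omega : 1 + (k+1) ≤ n), Nat.cast_sub (by omega : 1 ≤ n), Nat.cast_sub h1]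
    ring
  rw [Finset.prod_congr rfl hcast1, Finset.prod_congr rfl hcast2, hB]
  push_cast [← hprodN]
  ring

lemma betaN_cons_succ (a : ℕ) (M : List ℕ) (i : ℕ) : betaN (a :: M) (i+1) = betaN M i := by
  simp only [betaN, List.getD_cons_succ, List.length_cons]
  omega

lemma hookLen_cons (a : ℕ) (M : List ℕ) (i j : ℕ) (h : j < a) :
    hookLen (a :: M) (i+1) j = hookLen M i j := by
  unfold hookLen
  rw [List.getD_cons_succ, conjPart_cons, if_pos h]
  push_cast
  ring

lemma hook_formula (L : List ℕ) (hs : L.Pairwise (· ≥ ·)) :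
    hookProd L * vand L = ∏ i ∈ Finset.range L.length, ((Nat.factorial (betaN L i) : ℚ)) := by
  induction L with
  | nil => simp [hookProd, vand]
  | cons a M ih =>
    have hsM : M.Pairwise (· ≥ ·) := hs.of_cons
    have hentry : ∀ i, M.getD i 0 ≤ a := by
      intro i
      have := sorted_getD (a :: M) hs (Nat.zero_le (i+1))
      simpa using this
    have hne : (a :: M) ≠ [] := by simp
    -- decompose hookProd
    have hHP : hookProd (a :: M)
        = (∏ i ∈ Finset.range M.length, ∏ j ∈ Finset.range (M.getD i 0), (hookLen M i j : ℚ))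
          * ∏ j ∈ Finset.range a, (hookLen (a :: M) 0 j : ℚ) := by
      unfold hookProd
      rw [List.length_cons, Finset.prod_range_succ']
      congr 1
      · apply Finset.prod_congr rfl
        intro i _
        rw [List.getD_cons_succ]
        apply Finset.prod_congr rfl
        intro j hj
        simp only [Finset.mem_range] at hj
        rw [hookLen_cons a M i j (lt_of_lt_of_le hj (hentry i))]
    -- decompose vand
    have hV : vand (a :: M)
        = vand M * ∏ i ∈ Finset.range M.length, ((betaN (a :: M) 0 : ℚ) - (betaN (a :: M) (i+1) : ℚ)) := by
      unfold vand
      rw [List.length_cons, Finset.prod_range_succ']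
      have : ∀ i ∈ Finset.range M.length,
          (∏ j ∈ Finset.range (i+1), ((betaN (a :: M) j : ℚ) - (betaN (a :: M) (i+1) : ℚ)))
          = (∏ j ∈ Finset.range i, ((betaN M j : ℚ) - (betaN M i : ℚ)))
            * ((betaN (a :: M) 0 : ℚ) - (betaN (a :: M) (i+1) : ℚ)) := by
        intro i _
        rw [Finset.prod_range_succ']
        congr 1
        · apply Finset.prod_congr rfl
          intro j _
          rw [betaN_cons_succ, betaN_cons_succ]
      rw [Finset.prod_congr rfl this, Finset.prod_mul_distrib]
      simp [mul_comm]
    -- row zero via lemmaA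
    have hA := lemmaA (a :: M) hs hne
    have hA' : (∏ j ∈ Finset.range a, (hookLen (a :: M) 0 j : ℚ)) *
        ∏ i ∈ Finset.range M.length, ((betaN (a :: M) 0 : ℚ) - (betaN (a :: M) (i+1) : ℚ))
        = (Nat.factorial (betaN (a :: M) 0) : ℚ) := by
      have e1 : (a :: M).getD 0 0 = a := rfl
      have e2 : (a :: M).length - 1 = M.length := by simp
      rw [e1, e2] at hA
      exact hA
    rw [hHP, hV]
    have : (∏ i ∈ Finset.range M.length, ∏ j ∈ Finset.range (M.getD i 0), (hookLen M i j : ℚ))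
        = hookProd M := rfl
    rw [this]
    calc hookProd M * (∏ j ∈ Finset.range a, (hookLen (a :: M) 0 j : ℚ))
          * (vand M * ∏ i ∈ Finset.range M.length, ((betaN (a :: M) 0 : ℚ) - (betaN (a :: M) (i+1) : ℚ)))
        = (hookProd M * vand M) * ((∏ j ∈ Finset.range a, (hookLen (a :: M) 0 j : ℚ))
            * ∏ i ∈ Finset.range M.length, ((betaN (a :: M) 0 : ℚ) - (betaN (a :: M) (i+1) : ℚ))) := by ring
      _ = (∏ i ∈ Finset.range M.length, ((Nat.factorial (betaN M i) : ℚ)))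
            * (Nat.factorial (betaN (a :: M) 0) : ℚ) := by rw [ih hsM, hA']
      _ = ∏ i ∈ Finset.range (a :: M).length, ((Nat.factorial (betaN (a :: M) i) : ℚ)) := by
            rw [List.length_cons, Finset.prod_range_succ']
            congr 1
            apply Finset.prod_congr rfl
            intro i _
            rw [betaN_cons_succ]

lemma hookProd_pos (L : List ℕ) (hs : L.Pairwise (· ≥ ·)) : 0 < hookProd L :=
  Finset.prod_pos fun i hi => Finset.prod_pos fun j hj =>
    hookLen_pos_cast L hs (Finset.mem_range.1 hi) (Finset.mem_range.1 hj)

lemma betaN_lt (L : List ℕ) (hs : L.Pairwise (· ≥ ·)) {i j : ℕ} (hi : i < L.length)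
    (hij : j < i) : betaN L i < betaN L j := by
  have := sorted_getD L hs (le_of_lt hij)
  unfold betaN
  omega

lemma vand_pos (L : List ℕ) (hs : L.Pairwise (· ≥ ·)) : 0 < vand L := by
  apply Finset.prod_pos
  intro i hi
  apply Finset.prod_pos
  intro j hj
  simp only [Finset.mem_range] at hi hj
  have := betaN_lt L hs hi hj
  rw [sub_pos]
  exact_mod_cast this

lemma sum_getD (L : List ℕ) : L.sum = ∑ i ∈ Finset.range L.length, L.getD i 0 := by
  induction L with
  | nil => simp
  | cons a M ih =>
    rw [List.sum_cons, List.length_cons, Finset.sum_range_succ']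
    simp only [List.getD_cons_succ, List.getD_cons_zero]
    omega

lemma schur_mul_hook (L : List ℕ) (hs : L.Pairwise (· ≥ ·)) (t : ℚ) :
    schurSpec L t * hookProd L
      = ∏ i ∈ Finset.range L.length, ∏ j ∈ Finset.range (L.getD i 0), (t + ((j : ℚ) - (i : ℚ))) := by
  unfold schurSpec hookProd
  rw [← Finset.prod_mul_distrib]
  apply Finset.prod_congr rfl
  intro i hi
  rw [← Finset.prod_mul_distrib]
  apply Finset.prod_congr rfl
  intro j hj
  exact div_mul_cancel₀ _ (ne_of_gt (hookLen_pos_cast L hs (Finset.mem_range.1 hi) (Finset.mem_range.1 hj)))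

lemma ascProd (c : ℕ) : ∀ a : ℕ, (∏ j ∈ Finset.range a, ((c : ℚ) + 1 + j)) = (Nat.factorial (c+a) : ℚ) / (Nat.factorial c : ℚ)
  | 0 => by
    simp only [Finset.range_zero, Finset.prod_empty, Nat.add_zero]
    rw [div_self (Nat.cast_ne_zero.2 (Nat.factorial_ne_zero c))]
  | (a+1) => by
    rw [Finset.prod_range_succ, ascProd c a]
    have h1 : (Nat.factorial c : ℚ) ≠ 0 := Nat.cast_ne_zero.2 (Nat.factorial_ne_zero c)
    have h2 : Nat.factorial (c + (a+1)) = (c + a + 1) * Nat.factorial (c + a) := by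
      have : c + (a+1) = (c+a) + 1 := by omega
      rw [this, Nat.factorial_succ]
    rw [h2]
    push_cast
    field_simp
    ring

lemma descProd (x : ℕ) : ∀ (a : ℕ), a ≤ x →
    (∏ j ∈ Finset.range a, ((x : ℚ) - j)) = (Nat.factorial x : ℚ) / (Nat.factorial (x - a) : ℚ)
  | 0, _ => by
    simp only [Finset.range_zero, Finset.prod_empty, Nat.sub_zero]
    rw [div_self (Nat.cast_ne_zero.2 (Nat.factorial_ne_zero x))]
  | (a+1), h => by
    rw [Finset.prod_range_succ, descProd x a (by omega)]
    have h1 : (Nat.factorial (x - a) : ℚ) ≠ 0 := Nat.cast_ne_zero.2 (Nat.factorial_ne_zero _)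
    have h2 : (Nat.factorial (x - (a+1)) : ℚ) ≠ 0 := Nat.cast_ne_zero.2 (Nat.factorial_ne_zero _)
    have h3 : Nat.factorial (x - a) = (x - a) * Nat.factorial (x - (a+1)) := by
      have e : x - a = (x - (a+1)) + 1 := by omega
      rw [e, Nat.factorial_succ]
    have h4 : ((x - a : ℕ) : ℚ) = (x : ℚ) - a := by
      push_cast [Nat.cast_sub (by omega : a ≤ x)]
      ring
    rw [h3]
    push_cast
    rw [h4]
    have h5 : (x : ℚ) - a ≠ 0 := by
      have : (0:ℚ) < (x:ℚ) - a := by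
        rw [sub_pos]; exact_mod_cast (by omega : a < x)
      exact ne_of_gt this
    field_simp

lemma rowP (p i a : ℕ) (hi : i < p) :
    (∏ j ∈ Finset.range a, ((p:ℚ) + ((j:ℚ) - (i:ℚ))))
      = (Nat.factorial ((p-1-i) + a) : ℚ) / (Nat.factorial (p-1-i) : ℚ) := by
  rw [← ascProd (p-1-i) a]
  apply Finset.prod_congr rfl
  intro j hj
  have h : p = (p-1-i) + 1 + i := by omega
  have h2 : (p:ℚ) = ((p-1-i : ℕ):ℚ) + 1 + (i:ℚ) := by exact_mod_cast h
  rw [h2]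
  ring

lemma rowQ (q i a : ℕ) (ha : a ≤ q) :
    (∏ j ∈ Finset.range a, (-(q:ℚ) + ((j:ℚ) - (i:ℚ))))
      = (-1:ℚ)^a * ((Nat.factorial (q+i) : ℚ) / (Nat.factorial (q+i-a) : ℚ)) := by
  have e1 : ∀ j ∈ Finset.range a, (-(q:ℚ) + ((j:ℚ) - (i:ℚ))) = (-1) * (((q+i:ℕ):ℚ) - (j:ℚ)) := by
    intro j hj
    push_cast
    ring
  rw [Finset.prod_congr rfl e1, Finset.prod_mul_distrib, Finset.prod_const, Finset.card_range,
    descProd (q+i) a (by omega)]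

/-- **Lemma.** For `λ ⊆ p × q` (listed as `L = (λ_1, …, λ_p)`, parts possibly zero),
`H_{p×q} = (-1)^{|λ|} H_λ H_{λ̃} s_λ(1^p) s_λ(1^{-q})`, where `λ̃_i = q - λ_{p+1-i}`. -/
theorem hook_product_complement (p q : ℕ) (hp : 1 ≤ p) (hq : 1 ≤ q) (L : List ℕ)
    (hlen : L.length = p) (hsort : L.Pairwise (· ≥ ·)) (hle : ∀ a ∈ L, a ≤ q) :
    hookProd (List.replicate p q)
      = (-1 : ℚ) ^ L.sum * hookProd L * hookProd ((L.map (fun a => q - a)).reverse)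
        * schurSpec L (p : ℚ) * schurSpec L (-(q : ℚ)) := by
  have hale : ∀ i, L.getD i 0 ≤ q := by
    intro i
    by_cases h : i < L.length
    · rw [List.getD_eq_getElem _ _ h]
      exact hle _ (List.getElem_mem h)
    · rw [List.getD_eq_default _ _ (not_lt.1 h)]
      exact Nat.zero_le q
  set Cl := (L.map (fun a => q - a)).reverse with hCldef
  have hClen : Cl.length = p := by simp [hCldef, hlen]
  have hCsort : Cl.Pairwise (· ≥ ·) := by
    rw [hCldef]
    simp only [List.pairwise_reverse, List.pairwise_map]
    apply List.Pairwise.imp _ hsort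
    intro a b hab
    exact Nat.sub_le_sub_left hab q
  have hCget : ∀ i < p, Cl.getD i 0 = q - L.getD (p-1-i) 0 := by
    intro i hi
    have h1 : i < Cl.length := by omega
    rw [List.getD_eq_getElem _ _ h1]
    simp only [hCldef, List.getElem_reverse, List.getElem_map, List.length_reverse, List.length_map]
    rw [List.getD_eq_getElem _ _ (show p-1-i < L.length by omega)]
    congr 2
    omega
  have hCbeta : ∀ i < p, betaN Cl i = (p+q-1) - betaN L (p-1-i) := by
    intro i hi
    unfold betaN
    rw [hCget i hi, hClen, hlen]
    have h1 : L.getD (p-1-i) 0 ≤ q := hale _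
    omega
  have hβle : ∀ i, betaN L i ≤ p+q-1 := by
    intro i
    have := hale i
    unfold betaN
    rw [hlen]
    omega
  -- hook formula instances
  have hX : hookProd L * vand L = ∏ i ∈ Finset.range p, ((Nat.factorial (betaN L i)) : ℚ) := by
    have := hook_formula L hsort; rwa [hlen] at this
  have hC : hookProd Cl * vand Cl = ∏ i ∈ Finset.range p, ((Nat.factorial (betaN Cl i)) : ℚ) := by
    have := hook_formula Cl hCsort; rwa [hClen] at this
  -- vand Cl = vand L
  have hVC : vand Cl = vand L := by
    have e0 : vand Cl = ∏ i ∈ Finset.range p, ∏ j ∈ Finset.range i,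
        ((betaN L (p-1-i) : ℚ) - (betaN L (p-1-j) : ℚ)) := by
      unfold vand
      rw [hClen]
      apply Finset.prod_congr rfl
      intro i hi
      apply Finset.prod_congr rfl
      intro j hj
      simp only [Finset.mem_range] at hi hj
      rw [hCbeta i hi, hCbeta j (by omega)]
      have b1 := hβle (p-1-i)
      have b2 := hβle (p-1-j)
      push_cast [Nat.cast_sub b1, Nat.cast_sub b2]
      ring
    have e1 : (∏ i ∈ Finset.range p, ∏ j ∈ Finset.range i,
          ((betaN L (p-1-i) : ℚ) - (betaN L (p-1-j) : ℚ)))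
        = ∏ i ∈ Finset.range p, ∏ j ∈ Finset.range (p-1-i),
          ((betaN L i : ℚ) - (betaN L (i+1+j) : ℚ)) := by
      rw [← Finset.prod_range_reflect
        (fun i => ∏ j ∈ Finset.range i, ((betaN L (p-1-i) : ℚ) - (betaN L (p-1-j) : ℚ))) p]
      apply Finset.prod_congr rfl
      intro i hi
      simp only [Finset.mem_range] at hi
      have hpi : p - 1 - (p-1-i) = i := by omega
      rw [hpi]
      rw [← Finset.prod_range_reflect
        (fun j => ((betaN L i : ℚ) - (betaN L (i+1+j) : ℚ))) (p-1-i)]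
      apply Finset.prod_congr rfl
      intro j hj
      simp only [Finset.mem_range] at hj
      congr 3
      omega
    have e2 : vand L = ∏ i ∈ Finset.range p, ∏ j ∈ Finset.range (p-1-i),
        ((betaN L i : ℚ) - (betaN L (i+1+j) : ℚ)) := by
      unfold vand
      rw [hlen]
      rw [Finset.prod_comm' (t' := Finset.range p) (s' := fun j => Finset.Ico (j+1) p)
        (by intro x y; simp only [Finset.mem_range, Finset.mem_Ico]; omega)]
      apply Finset.prod_congr rfl
      intro j hj
      rw [Finset.prod_Ico_eq_prod_range]
      have : p - (j+1) = p-1-j := by omega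
      rw [this]
    rw [e0, e1, ← e2]
  -- identify complement factorials
  have hD : (∏ i ∈ Finset.range p, ((Nat.factorial (betaN Cl i)) : ℚ))
      = ∏ i ∈ Finset.range p, ((Nat.factorial (q + i - L.getD i 0)) : ℚ) := by
    rw [← Finset.prod_range_reflect (fun i => ((Nat.factorial (q + i - L.getD i 0)) : ℚ)) p]
    apply Finset.prod_congr rfl
    intro i hi
    simp only [Finset.mem_range] at hi
    rw [hCbeta i hi]
    congr 2
    have h1 := hale (p-1-i)
    unfold betaN
    rw [hlen]
    omega
  -- replicate facts
  set R := List.replicate p q with hRdef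
  have hRlen : R.length = p := by simp [hRdef]
  have hRsort : R.Pairwise (· ≥ ·) := List.pairwise_replicate.2 (Or.inr (le_refl q))
  have hRget : ∀ i < p, R.getD i 0 = q := by
    intro i hi
    rw [List.getD_eq_getElem _ _ (by omega : i < R.length)]
    simp [hRdef]
  have hRbeta : ∀ i < p, betaN R i = q + (p-1-i) := by
    intro i hi
    unfold betaN
    rw [hRget i hi, hRlen]
  have hR : hookProd R * vand R = ∏ i ∈ Finset.range p, ((Nat.factorial (betaN R i)) : ℚ) := by
    have := hook_formula R hRsort; rwa [hRlen] at this
  have hW : (∏ i ∈ Finset.range p, ((Nat.factorial (betaN R i)) : ℚ))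
      = ∏ i ∈ Finset.range p, ((Nat.factorial (q + i)) : ℚ) := by
    rw [← Finset.prod_range_reflect (fun i => ((Nat.factorial (q + i)) : ℚ)) p]
    apply Finset.prod_congr rfl
    intro i hi
    simp only [Finset.mem_range] at hi
    rw [hRbeta i hi]
  have hVR : vand R = ∏ i ∈ Finset.range p, ((Nat.factorial (p-1-i)) : ℚ) := by
    unfold vand
    rw [hRlen]
    rw [← Finset.prod_range_reflect (fun i => ((Nat.factorial (p-1-i)) : ℚ)) p]
    apply Finset.prod_congr rfl
    intro i hi
    simp only [Finset.mem_range] at hi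
    have hpi : p - 1 - (p-1-i) = i := by omega
    rw [hpi]
    have e : ∀ j ∈ Finset.range i, ((betaN R j : ℚ) - (betaN R i : ℚ)) = ((i:ℚ) - j) := by
      intro j hj
      simp only [Finset.mem_range] at hj
      rw [hRbeta i (by omega), hRbeta j (by omega)]
      push_cast [Nat.cast_sub (show i ≤ p-1 by omega), Nat.cast_sub (show j ≤ p-1 by omega),
        Nat.cast_sub (show 1 ≤ p by omega)]
      ring
    rw [Finset.prod_congr rfl e, descProd i i (le_refl i)]
    simp
  -- Schur specialization computations
  have hsP : schurSpec L (p:ℚ) * hookProd L * (∏ i ∈ Finset.range p, ((Nat.factorial (p-1-i)) : ℚ))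
      = ∏ i ∈ Finset.range p, ((Nat.factorial (betaN L i)) : ℚ) := by
    rw [schur_mul_hook L hsort, hlen, ← Finset.prod_mul_distrib]
    apply Finset.prod_congr rfl
    intro i hi
    simp only [Finset.mem_range] at hi
    rw [rowP p i (L.getD i 0) hi]
    rw [div_mul_cancel₀ _ (Nat.cast_ne_zero.2 (Nat.factorial_ne_zero (p-1-i)))]
    congr 2
    unfold betaN
    rw [hlen]
    omega
  have hsQ : schurSpec L (-(q:ℚ)) * hookProd L
        * (∏ i ∈ Finset.range p, ((Nat.factorial (q + i - L.getD i 0)) : ℚ))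
      = (-1:ℚ)^L.sum * ∏ i ∈ Finset.range p, ((Nat.factorial (q + i)) : ℚ) := by
    rw [schur_mul_hook L hsort, hlen, ← Finset.prod_mul_distrib]
    have e : ∀ i ∈ Finset.range p,
        (∏ j ∈ Finset.range (L.getD i 0), (-(q:ℚ) + ((j : ℚ) - (i : ℚ))))
          * ((Nat.factorial (q + i - L.getD i 0)) : ℚ)
        = (-1:ℚ)^(L.getD i 0) * ((Nat.factorial (q + i)) : ℚ) := by
      intro i hi
      rw [rowQ q i (L.getD i 0) (hale i)]
      rw [mul_assoc, div_mul_cancel₀ _ (Nat.cast_ne_zero.2 (Nat.factorial_ne_zero (q + i - L.getD i 0)))]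
    rw [Finset.prod_congr rfl e, Finset.prod_mul_distrib, Finset.prod_pow_eq_pow_sum]
    congr 2
    rw [sum_getD L, hlen]
  -- nonzero facts
  have hXne : hookProd L ≠ 0 := ne_of_gt (hookProd_pos L hsort)
  have hUne : (∏ i ∈ Finset.range p, ((Nat.factorial (p-1-i)) : ℚ)) ≠ 0 :=
    Finset.prod_ne_zero_iff.2 fun i _ => Nat.cast_ne_zero.2 (Nat.factorial_ne_zero _)
  -- final algebra
  set ε : ℚ := (-1:ℚ)^L.sum with hε
  set U : ℚ := ∏ i ∈ Finset.range p, ((Nat.factorial (p-1-i)) : ℚ) with hU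
  have hee : ε * ε = 1 := by
    rw [hε, ← mul_pow]
    norm_num
  have g1 : schurSpec L (p:ℚ) * U = vand L := by
    apply mul_left_cancel₀ hXne
    have : hookProd L * (schurSpec L (p:ℚ) * U) = schurSpec L (p:ℚ) * hookProd L * U := by ring
    rw [this, hsP, ← hX]
  have g3 : schurSpec L (-(q:ℚ)) * hookProd L * (hookProd Cl * vand L)
      = ε * ∏ i ∈ Finset.range p, ((Nat.factorial (q + i)) : ℚ) := by
    rw [← hVC, hC, hD, hsQ]
  have key : hookProd R * U = (ε * hookProd L * hookProd Cl * schurSpec L (p:ℚ)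
      * schurSpec L (-(q:ℚ))) * U := by
    calc hookProd R * U = ∏ i ∈ Finset.range p, ((Nat.factorial (q + i)) : ℚ) := by
          rw [← hW, ← hR, hVR]
      _ = ε * (ε * ∏ i ∈ Finset.range p, ((Nat.factorial (q + i)) : ℚ)) := by
          rw [← mul_assoc, hee, one_mul]
      _ = ε * (schurSpec L (-(q:ℚ)) * hookProd L * (hookProd Cl * vand L)) := by rw [g3]
      _ = ε * (schurSpec L (-(q:ℚ)) * hookProd L * (hookProd Cl * (schurSpec L (p:ℚ) * U))) := by
          rw [g1]
      _ = (ε * hookProd L * hookProd Cl * schurSpec L (p:ℚ) * schurSpec L (-(q:ℚ))) * U := by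
          ring
  exact mul_right_cancel₀ hUne key
end

section
/- Let p, q ≥ 1 and let μ be a partition of k with k ≤ pq. Then the value of the irreducible character of S_{pq} indexed by the rectangle p×q satisfies χ^{p×q}(μ, 1^{pq−k}) = Σ_λ χ^λ(μ) · f^{λ̃}, where the sum is over all partitions λ of k contained in the rectangle p×q, and λ̃ is the complementary partition λ̃_i = q − λ_{p+1−i} (taking λ = (λ_1,…,λ_p) with parts possibly zero). -/
open MvPolynomial

/-- The Vandermonde product `∏_{i<j} (x_i - x_j)`. -/
noncomputable def vandermondeMv (r : ℕ) : MvPolynomial (Fin r) ℤ :=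
  ∏ p ∈ Finset.univ.filter (fun p : Fin r × Fin r => p.1 < p.2), (X p.1 - X p.2)

/-- The power sum `x_1^a + ⋯ + x_r^a`. -/
noncomputable def powerSumMv (r : ℕ) (a : ℕ) : MvPolynomial (Fin r) ℤ :=
  ∑ i : Fin r, X i ^ a

/-- Frobenius character formula definition of the irreducible symmetric group character
`χ^λ(μ)`: the coefficient of `x^{λ+δ}` in `(∏_{i<j}(x_i-x_j)) · p_μ`, where `L` lists the
parts of `λ` (weakly decreasing, zeros allowed) and `μ` is the multiset of cycle lengths. -/
noncomputable def symChar (L : List ℕ) (μ : Multiset ℕ) : ℤ :=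
  MvPolynomial.coeff
    (Finsupp.equivFunOnFinite.symm
      (fun i : Fin L.length => L.get i + (L.length - 1 - (i : ℕ))))
    (vandermondeMv L.length * (μ.map (powerSumMv L.length)).prod)

namespace RectAux

open Finset Equiv

variable {r : ℕ}

/-- exponent vector as a finsupp -/
noncomputable def fn (g : Fin r → ℕ) : Fin r →₀ ℕ := Finsupp.equivFunOnFinite.symm g

@[simp] lemma fn_apply (g : Fin r → ℕ) (i : Fin r) : fn g i = g i := rfl

lemma vander_eq_det (r : ℕ) :
    vandermondeMv r
      = (Matrix.vandermonde fun i : Fin r => (X i.rev : MvPolynomial (Fin r) ℤ)).det := by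
  rw [Matrix.det_vandermonde, vandermondeMv, Finset.prod_sigma']
  refine Finset.prod_nbij' (fun p => ⟨p.2.rev, p.1.rev⟩) (fun x => (x.2.rev, x.1.rev)) ?_ ?_ ?_ ?_ ?_
  · rintro ⟨a, b⟩ h
    simp only [Finset.mem_filter, Finset.mem_univ, true_and] at h
    simp only [Finset.mem_sigma, Finset.mem_univ, Finset.mem_Ioi, true_and]
    exact Fin.rev_lt_rev.mpr h
  · rintro ⟨a, b⟩ h
    simp only [Finset.mem_sigma, Finset.mem_univ, Finset.mem_Ioi, true_and] at h
    simp only [Finset.mem_filter, Finset.mem_univ, true_and]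
    exact Fin.rev_lt_rev.mpr h
  · rintro ⟨a, b⟩ _; simp [Fin.rev_rev]
  · rintro ⟨a, b⟩ _; simp [Fin.rev_rev]
  · rintro ⟨a, b⟩ _; simp [Fin.rev_rev]

/-- The exponent vector of the `σ` term in the determinant expansion of the Vandermonde. -/
noncomputable def Dex (σ : Perm (Fin r)) : Fin r →₀ ℕ := fn fun j => ((σ⁻¹ j.rev : Fin r) : ℕ)

lemma vander_expand (r : ℕ) :
    vandermondeMv r
      = ∑ σ : Perm (Fin r), (Perm.sign σ : ℤ) * (monomial (Dex σ) (1 : ℤ)) := by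
  rw [vander_eq_det, Matrix.det_apply']
  refine Finset.sum_congr rfl fun σ _ => ?_
  have : (∏ i : Fin r, (Matrix.vandermonde fun i : Fin r =>
      (X i.rev : MvPolynomial (Fin r) ℤ)) (σ i) i) = monomial (Dex σ) (1 : ℤ) := by
    simp only [Matrix.vandermonde]
    rw [show (∏ i : Fin r, ((Matrix.of fun i j : Fin r =>
        (X i.rev : MvPolynomial (Fin r) ℤ) ^ (j : ℕ)) (σ i) i))
        = ∏ i : Fin r, (monomial (Finsupp.single (σ i).rev (i : ℕ)) (1 : ℤ)) from
      Finset.prod_congr rfl fun i _ => by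
        rw [Matrix.of_apply, X_pow_eq_monomial], ← monomial_sum_one]
    have h2 : (∑ i : Fin r, Finsupp.single (σ i).rev ((i : Fin r) : ℕ)) = Dex σ := by
      ext j
      rw [Finsupp.finset_sum_apply]
      rw [Finset.sum_eq_single (σ⁻¹ j.rev)]
      · simp [Dex, Finsupp.single_apply]
      · intro b _ hb
        rw [Finsupp.single_apply, if_neg]
        intro h
        apply hb
        have : σ b = j.rev := by rw [← Fin.rev_rev (σ b), h]
        simp [← this]
      · simp
    rw [h2]
  rw [this]

lemma coeff_vander_mul (T : MvPolynomial (Fin r) ℤ) (d : Fin r →₀ ℕ) :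
    coeff d (vandermondeMv r * T)
      = ∑ σ : Perm (Fin r), (Perm.sign σ : ℤ) *
          (if Dex σ ≤ d then coeff (d - Dex σ) T else 0) := by
  rw [vander_expand, Finset.sum_mul]
  rw [coeff_sum]
  refine Finset.sum_congr rfl fun σ _ => ?_
  rw [mul_assoc, ← zsmul_eq_mul, coeff_smul, coeff_monomial_mul']
  simp [mul_ite]

/-- mapDomain of a permutation, applied. -/
lemma mapDomain_perm_apply (π : Perm (Fin r)) (d : Fin r →₀ ℕ) (j : Fin r) :
    Finsupp.mapDomain (π : Fin r → Fin r) d j = d (π⁻¹ j) := by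
  conv_lhs => rw [show j = π (π⁻¹ j) by simp]
  exact Finsupp.mapDomain_apply π.injective d _

lemma rename_vander (π : Perm (Fin r)) :
    rename (π : Fin r → Fin r) (vandermondeMv r) = (Perm.sign π : ℤ) • vandermondeMv r := by
  have h1 : rename (π : Fin r → Fin r) (vandermondeMv r)
      = (Matrix.vandermonde fun i : Fin r => (X (π i.rev) : MvPolynomial (Fin r) ℤ)).det := by
    rw [vander_eq_det]
    rw [← RingHom.coe_coe (rename (π : Fin r → Fin r)), RingHom.map_det]
    congr 1
    ext i j
    simp [Matrix.vandermonde]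
  have h2 : (Matrix.vandermonde fun i : Fin r => (X (π i.rev) : MvPolynomial (Fin r) ℤ))
      = (Matrix.vandermonde fun i : Fin r => (X i.rev : MvPolynomial (Fin r) ℤ)).submatrix
          (⇑(Fin.revPerm * π * Fin.revPerm : Perm (Fin r))) id := by
    ext i j
    simp [Matrix.vandermonde, Matrix.submatrix, Fin.rev_rev]
  rw [h1, h2, Matrix.det_permute, ← vander_eq_det]
  have hs : Perm.sign (Fin.revPerm * π * Fin.revPerm : Perm (Fin r)) = Perm.sign π := by
    rw [Equiv.Perm.sign_mul, Equiv.Perm.sign_mul]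
    have : (Perm.sign (Fin.revPerm : Perm (Fin r))) * Perm.sign (Fin.revPerm : Perm (Fin r)) = 1 := by
      rw [← Equiv.Perm.sign_mul]
      have : (Fin.revPerm * Fin.revPerm : Perm (Fin r)) = 1 := by ext x; simp
      rw [this, Equiv.Perm.sign_one]
    calc Perm.sign (Fin.revPerm : Perm (Fin r)) * Perm.sign π * Perm.sign (Fin.revPerm : Perm (Fin r))
        = Perm.sign π * (Perm.sign (Fin.revPerm : Perm (Fin r)) * Perm.sign (Fin.revPerm : Perm (Fin r))) := by
          rw [mul_comm (Perm.sign (Fin.revPerm : Perm (Fin r))) (Perm.sign π), mul_assoc]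
      _ = Perm.sign π := by rw [this, mul_one]
  rw [hs, zsmul_eq_mul]

lemma coeff_perm_symm {T : MvPolynomial (Fin r) ℤ} (hT : T.IsSymmetric)
    (π : Perm (Fin r)) (d : Fin r →₀ ℕ) :
    coeff (Finsupp.mapDomain (π : Fin r → Fin r) d) T = coeff d T := by
  conv_lhs => rw [← hT π]
  exact coeff_rename_mapDomain _ π.injective _ _

lemma coeff_perm_vander_mul {S : MvPolynomial (Fin r) ℤ} (hS : S.IsSymmetric)
    (π : Perm (Fin r)) (d : Fin r →₀ ℕ) :
    coeff (Finsupp.mapDomain (π : Fin r → Fin r) d) (vandermondeMv r * S)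
      = (Perm.sign π : ℤ) * coeff d (vandermondeMv r * S) := by
  have hren : rename (⇑π) (vandermondeMv r * S) = (Perm.sign π : ℤ) • (vandermondeMv r * S) := by
    rw [map_mul, rename_vander, hS π, smul_mul_assoc]
  have h := coeff_rename_mapDomain (⇑π) π.injective (vandermondeMv r * S) d
  rw [hren, coeff_smul] at h
  rcases Int.units_eq_one_or (Perm.sign π) with hs | hs <;> rw [hs] at h ⊢ <;>
    simp at h ⊢ <;> omega

lemma coeff_vander_mul_eq_zero_of_rep {S : MvPolynomial (Fin r) ℤ} (hS : S.IsSymmetric)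
    {d : Fin r →₀ ℕ} {i j : Fin r} (hij : i ≠ j) (hd : d i = d j) :
    coeff d (vandermondeMv r * S) = 0 := by
  have hmap : Finsupp.mapDomain (⇑(Equiv.swap i j)) d = d := by
    ext x
    rw [mapDomain_perm_apply]
    rcases eq_or_ne x i with rfl | hxi
    · simp [Equiv.swap_inv, Equiv.swap_apply_left, ← hd]
    rcases eq_or_ne x j with rfl | hxj
    · simp [Equiv.swap_inv, Equiv.swap_apply_right, hd]
    · rw [Equiv.swap_inv, Equiv.swap_apply_of_ne_of_ne hxi hxj]
  have h := coeff_perm_vander_mul hS (Equiv.swap i j) d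
  rw [hmap, Equiv.Perm.sign_swap hij] at h
  simp at h
  linarith
  
lemma strictMono_add_le {m : Fin r → ℕ} (hm : StrictMono m) :
    ∀ n : ℕ, ∀ i j : Fin r, (j : ℕ) = (i : ℕ) + n → m i + (j : ℕ) ≤ m j + (i : ℕ) := by
  intro n
  induction n with
  | zero => intro i j h; have : i = j := Fin.ext (by omega); subst this; omega
  | succ n ih =>
    intro i j h
    have hjn : (i : ℕ) + n < r := by omega
    have h1 := ih i ⟨(i : ℕ) + n, hjn⟩ rfl
    have h2 : m ⟨(i : ℕ) + n, hjn⟩ < m j := hm (by simp [Fin.lt_def]; omega)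
    have h3 : ((⟨(i : ℕ) + n, hjn⟩ : Fin r) : ℕ) = (i : ℕ) + n := rfl
    omega


lemma strictMono_le' {m : Fin r → ℕ} (hm : StrictMono m) {i j : Fin r} (h : i ≤ j) :
    m i + (j : ℕ) ≤ m j + (i : ℕ) :=
  strictMono_add_le hm ((j : ℕ) - (i : ℕ)) i j (by have := (Fin.le_def.mp h); omega)

/-- `λ + δ` exponent vector. -/
noncomputable def Bex (f : Fin r → ℕ) : Fin r →₀ ℕ := fn fun i => f i + ((r - 1) - (i : ℕ))

/-- `λ̃ + δ` exponent vector (complement in the `p × q` box). -/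
noncomputable def Cex (q : ℕ) (f : Fin r → ℕ) : Fin r →₀ ℕ :=
  fn fun j => (q - f j.rev) + ((r - 1) - (j : ℕ))

noncomputable def sortedPart (a : Fin r → ℕ) : Fin r → ℕ :=
  fun i => a (Tuple.sort a i.rev) - ((r - 1) - (i : ℕ))

noncomputable def sortPermD (a : Fin r → ℕ) : Perm (Fin r) :=
  (Fin.revPerm : Perm (Fin r)).trans (Tuple.sort a)

lemma sort_strictMono {a : Fin r → ℕ} (ha : Function.Injective a) :
    StrictMono (a ∘ ⇑(Tuple.sort a)) :=
  (Tuple.monotone_sort a).strictMono_of_injective (ha.comp (Tuple.sort a).injective)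

lemma sort_low {a : Fin r → ℕ} (ha : Function.Injective a) (i : Fin r) :
    (r - 1) - (i : ℕ) ≤ a (Tuple.sort a i.rev) := by
  have h0 : (0 : ℕ) < r := i.pos
  have hle : (⟨0, h0⟩ : Fin r) ≤ i.rev := by simp [Fin.le_def]
  have h2 := strictMono_le' (sort_strictMono ha) hle
  simp only [Function.comp, Fin.val_rev] at h2
  omega

lemma bex_sortedPart_apply {a : Fin r → ℕ} (ha : Function.Injective a) (i : Fin r) :
    Bex (sortedPart a) i = a (Tuple.sort a i.rev) := by
  simp only [Bex, fn_apply, sortedPart]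
  exact Nat.sub_add_cancel (sort_low ha i)

lemma mapDomain_sortPermD {a : Fin r → ℕ} (ha : Function.Injective a) :
    Finsupp.mapDomain (⇑(sortPermD a)) (Bex (sortedPart a)) = fn a := by
  ext j
  rw [mapDomain_perm_apply]
  have hinv : (sortPermD a)⁻¹ j = ((Tuple.sort a)⁻¹ j).rev := rfl
  rw [hinv, bex_sortedPart_apply ha, Fin.rev_rev]
  simp

lemma sortedPart_antitone {a : Fin r → ℕ} (ha : Function.Injective a) :
    Antitone (sortedPart a) := by
  intro i j hij
  have h := strictMono_le' (sort_strictMono ha) (show j.rev ≤ i.rev from Fin.rev_le_rev.mpr hij)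
  have l1 := sort_low ha i
  have l2 := sort_low ha j
  simp only [Function.comp, Fin.val_rev] at h
  simp only [sortedPart]
  have hi := i.isLt
  have hj := j.isLt
  have hle := Fin.le_def.mp hij
  omega

lemma sortedPart_le {a : Fin r → ℕ} (ha : Function.Injective a) {q : ℕ}
    (hb : ∀ j, a j ≤ q + (r - 1)) (i : Fin r) : sortedPart a i ≤ q := by
  have h0 : (0 : ℕ) < r := i.pos
  have htop : i.rev ≤ (⟨r - 1, by omega⟩ : Fin r) := by simp [Fin.le_def, Fin.val_rev]; omega
  have h := strictMono_le' (sort_strictMono ha) htop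
  have hM := hb (Tuple.sort a ⟨r - 1, by omega⟩)
  simp only [Function.comp, Fin.val_rev] at h
  simp only [sortedPart]
  have hi := i.isLt
  omega

lemma sort_unique {a : Fin r → ℕ} (ha : Function.Injective a) {π : Perm (Fin r)}
    (hπ : Monotone (a ∘ ⇑π)) : π = Tuple.sort a := by
  have h := Tuple.comp_sort_eq_comp_iff_monotone.mpr hπ
  exact Equiv.ext fun x => ha (congrFun h x)

lemma bex_fun_inj {f : Fin r → ℕ} (hf : Antitone f) :
    Function.Injective fun i : Fin r => f i + ((r - 1) - (i : ℕ)) := by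
  intro i j h
  by_contra hne
  simp only at h
  rcases Ne.lt_or_gt hne with hlt | hlt
  · have h2 := hf hlt.le
    have h1 := Fin.lt_def.mp hlt
    have := j.isLt
    omega
  · have h2 := hf hlt.le
    have h1 := Fin.lt_def.mp hlt
    have := i.isLt
    omega

lemma recover_eq {f : Fin r → ℕ} (hf : Antitone f) (σ : Perm (Fin r)) :
    sortPermD (fun j : Fin r => f (σ⁻¹ j) + ((r - 1) - ((σ⁻¹ j : Fin r) : ℕ))) = σ
      ∧ sortedPart (fun j : Fin r => f (σ⁻¹ j) + ((r - 1) - ((σ⁻¹ j : Fin r) : ℕ))) = f := by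
  set a : Fin r → ℕ := fun j => f (σ⁻¹ j) + ((r - 1) - ((σ⁻¹ j : Fin r) : ℕ)) with ha_def
  have ha : Function.Injective a := by
    have : a = (fun i : Fin r => f i + ((r - 1) - (i : ℕ))) ∘ ⇑σ⁻¹ := rfl
    rw [this]
    exact (bex_fun_inj hf).comp σ⁻¹.injective
  have hval : ∀ x : Fin r, a (σ x.rev) = f x.rev + (x : ℕ) := by
    intro x
    have h1 : σ⁻¹ (σ x.rev) = x.rev := by simp
    have h2 : (x.rev : ℕ) = (r - 1) - (x : ℕ) := by rw [Fin.val_rev]; omega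
    have h3 := x.isLt
    simp only [ha_def, h1, h2]
    congr 1
    omega
  have hmono : Monotone (a ∘ ⇑((Fin.revPerm : Perm (Fin r)).trans σ)) := by
    intro x y hxy
    simp only [Function.comp, Equiv.trans_apply, Fin.revPerm_apply]
    rw [hval x, hval y]
    have hfxy : f x.rev ≤ f y.rev := hf (Fin.rev_le_rev.mpr hxy)
    have := Fin.le_def.mp hxy
    omega
  have hsort : (Fin.revPerm : Perm (Fin r)).trans σ = Tuple.sort a := sort_unique ha hmono
  constructor
  · rw [sortPermD, ← hsort]
    refine Equiv.ext fun x => ?_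
    show σ x.rev.rev = σ x
    rw [Fin.rev_rev]
  · funext i
    rw [sortedPart, ← hsort]
    have : ((Fin.revPerm : Perm (Fin r)).trans σ) i.rev = σ i.rev.rev := rfl
    rw [this, Fin.rev_rev, ← Fin.rev_rev i, hval i.rev, Fin.rev_rev]
    have h2 : (i.rev : ℕ) = (r - 1) - (i : ℕ) := by rw [Fin.val_rev]; omega
    rw [h2]
    omega

section Inner

variable (q : ℕ)

lemma mapDomain_bex_apply (f : Fin r → ℕ) (σ : Perm (Fin r)) (j : Fin r) :
    Finsupp.mapDomain ⇑σ (Bex f) j = f (σ⁻¹ j) + ((r - 1) - ((σ⁻¹ j : Fin r) : ℕ)) := by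
  rw [mapDomain_perm_apply]; rfl

lemma dex_inv_apply (σ : Perm (Fin r)) (m : Fin r) :
    Dex σ⁻¹ m = ((σ m.rev : Fin r) : ℕ) := by
  simp [Dex]

lemma cond_equiv (f : Fin r → ℕ) (hfq : ∀ i, f i ≤ q) (σ : Perm (Fin r)) :
    Finsupp.mapDomain ⇑σ (Bex f) ≤ fn (fun j : Fin r => q + ((r - 1) - (j : ℕ)))
      ↔ Dex σ⁻¹ ≤ Cex q f := by
  rw [Finsupp.le_def, Finsupp.le_def]
  constructor
  · intro h m
    have hj := h (σ m.rev)
    rw [mapDomain_bex_apply] at hj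
    have h1 : σ⁻¹ (σ m.rev) = m.rev := by simp
    rw [h1] at hj
    rw [dex_inv_apply]
    simp only [Cex, fn_apply] at hj ⊢
    have h2 : (m.rev : ℕ) = (r - 1) - (m : ℕ) := by rw [Fin.val_rev]; omega
    rw [h2] at hj
    have := (σ m.rev).isLt
    have := m.isLt
    have := hfq m.rev
    omega
  · intro h j
    have hm := h (σ⁻¹ j).rev
    rw [dex_inv_apply, Fin.rev_rev] at hm
    simp only [show σ (σ⁻¹ j) = j from σ.apply_symm_apply j] at hm
    rw [mapDomain_bex_apply]
    simp only [Cex, fn_apply] at hm ⊢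
    rw [Fin.rev_rev] at hm
    have h2 : ((σ⁻¹ j).rev : ℕ) = (r - 1) - ((σ⁻¹ j : Fin r) : ℕ) := by rw [Fin.val_rev]; omega
    rw [h2] at hm
    have := (σ⁻¹ j).isLt
    have := j.isLt
    have := hfq (σ⁻¹ j)
    omega

lemma diff_eq (f : Fin r → ℕ) (hfq : ∀ i, f i ≤ q) (σ : Perm (Fin r))
    (hc : Finsupp.mapDomain ⇑σ (Bex f) ≤ fn (fun j : Fin r => q + ((r - 1) - (j : ℕ)))) :
    fn (fun j : Fin r => q + ((r - 1) - (j : ℕ))) - Finsupp.mapDomain ⇑σ (Bex f)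
      = Finsupp.mapDomain ⇑((Fin.revPerm : Perm (Fin r)).trans σ) (Cex q f - Dex σ⁻¹) := by
  ext j
  rw [Finsupp.tsub_apply, mapDomain_perm_apply, mapDomain_perm_apply, Finsupp.tsub_apply]
  have hpi : ((Fin.revPerm : Perm (Fin r)).trans σ)⁻¹ j = (σ⁻¹ j).rev := rfl
  rw [hpi, dex_inv_apply, Fin.rev_rev]
  simp only [show σ (σ⁻¹ j) = j from σ.apply_symm_apply j, Bex, Cex, fn_apply, Fin.rev_rev]
  have hcj := Finsupp.le_def.mp hc j
  rw [mapDomain_bex_apply] at hcj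
  simp only [fn_apply] at hcj
  have h2 : ((σ⁻¹ j).rev : ℕ) = (r - 1) - ((σ⁻¹ j : Fin r) : ℕ) := by rw [Fin.val_rev]; omega
  rw [h2]
  have := (σ⁻¹ j).isLt
  have := j.isLt
  have := hfq (σ⁻¹ j)
  omega

lemma inner_step {T : MvPolynomial (Fin r) ℤ} (hT : T.IsSymmetric)
    (f : Fin r → ℕ) (hfq : ∀ i, f i ≤ q) :
    ∑ σ : Perm (Fin r), (Perm.sign σ : ℤ) *
        (if Finsupp.mapDomain ⇑σ (Bex f) ≤ fn (fun j : Fin r => q + ((r - 1) - (j : ℕ)))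
          then coeff (fn (fun j : Fin r => q + ((r - 1) - (j : ℕ)))
                  - Finsupp.mapDomain ⇑σ (Bex f)) T else 0)
      = coeff (Cex q f) (vandermondeMv r * T) := by
  classical
  rw [coeff_vander_mul]
  refine Fintype.sum_equiv (Equiv.inv (Perm (Fin r))) _ _ fun σ => ?_
  simp only [Equiv.inv_apply]
  rw [Equiv.Perm.sign_inv]
  congr 1
  by_cases hc : Finsupp.mapDomain ⇑σ (Bex f) ≤ fn (fun j : Fin r => q + ((r - 1) - (j : ℕ)))
  · rw [if_pos hc, if_pos ((cond_equiv q f hfq σ).mp hc)]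
    rw [diff_eq q f hfq σ hc, coeff_perm_symm hT]
  · rw [if_neg hc, if_neg (fun h => hc ((cond_equiv q f hfq σ).mpr h))]

end Inner

open scoped Classical in
lemma main_expand (r q : ℕ) {S T : MvPolynomial (Fin r) ℤ}
    (hS : S.IsSymmetric) (hT : T.IsSymmetric) :
    coeff (fn fun j : Fin r => q + ((r - 1) - (j : ℕ))) (vandermondeMv r * S * T)
      = ∑ f ∈ Finset.univ.filter (fun f : Fin r → Fin (q + 1) =>
            Antitone fun i => (f i : ℕ)),
          coeff (Bex fun i => ((f i : ℕ))) (vandermondeMv r * S)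
            * coeff (Cex q fun i => ((f i : ℕ))) (vandermondeMv r * T) := by
  set c : Fin r →₀ ℕ := fn fun j : Fin r => q + ((r - 1) - (j : ℕ)) with hc_def
  have hstep : ∀ f : Fin r → Fin (q + 1),
      coeff (Bex fun i => ((f i : ℕ))) (vandermondeMv r * S)
        * coeff (Cex q fun i => ((f i : ℕ))) (vandermondeMv r * T)
      = ∑ σ : Perm (Fin r),
          (if Finsupp.mapDomain ⇑σ (Bex fun i => ((f i : ℕ))) ≤ c then
            coeff (Finsupp.mapDomain ⇑σ (Bex fun i => ((f i : ℕ)))) (vandermondeMv r * S)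
              * coeff (c - Finsupp.mapDomain ⇑σ (Bex fun i => ((f i : ℕ)))) T
          else 0) := by
    intro f
    rw [← inner_step q hT (fun i => (f i : ℕ)) (fun i => Nat.lt_succ_iff.mp (f i).isLt),
      Finset.mul_sum]
    refine Finset.sum_congr rfl fun σ _ => ?_
    rw [coeff_perm_vander_mul hS σ]
    split_ifs with h
    · ring
    · ring
  rw [Finset.sum_congr rfl fun f _ => hstep f]
  rw [← Finset.sum_product']
  rw [← Finset.sum_filter]
  rw [MvPolynomial.coeff_mul]
  have hsplit : ∑ x ∈ Finset.HasAntidiagonal.antidiagonal c, coeff x.1 (vandermondeMv r * S) * coeff x.2 T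
      = ∑ x ∈ (Finset.HasAntidiagonal.antidiagonal c).filter
            (fun x : (Fin r →₀ ℕ) × (Fin r →₀ ℕ) => Function.Injective ⇑x.1),
          coeff x.1 (vandermondeMv r * S) * coeff x.2 T := by
    refine (Finset.sum_filter_of_ne ?_).symm
    intro x _ hne
    by_contra hninj
    rw [Function.not_injective_iff] at hninj
    obtain ⟨i, j, heq, hij⟩ := hninj
    exact hne (by rw [coeff_vander_mul_eq_zero_of_rep hS hij heq, zero_mul])
  rw [hsplit]
  have fn_coe : ∀ d : Fin r →₀ ℕ, fn ⇑d = d := fun d => Finsupp.ext fun _ => rfl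
  refine (Finset.sum_nbij'
    (i := fun y : (Fin r → Fin (q + 1)) × Perm (Fin r) =>
      (Finsupp.mapDomain ⇑y.2 (Bex fun i => ((y.1 i : ℕ))),
        c - Finsupp.mapDomain ⇑y.2 (Bex fun i => ((y.1 i : ℕ)))))
    (j := fun x : (Fin r →₀ ℕ) × (Fin r →₀ ℕ) =>
      ((fun i : Fin r => (⟨min (sortedPart (⇑x.1) i) q, by omega⟩ : Fin (q + 1))),
        sortPermD ⇑x.1))
    ?_ ?_ ?_ ?_ ?_).symm
  · -- membership forward
    rintro ⟨f, σ⟩ hy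
    rw [Finset.mem_filter] at hy
    obtain ⟨hy1, hcond⟩ := hy
    rw [Finset.mem_product, Finset.mem_filter] at hy1
    have hf : Antitone fun i => ((f i : ℕ)) := hy1.1.2
    rw [Finset.mem_filter, Finset.HasAntidiagonal.mem_antidiagonal]
    constructor
    · exact add_tsub_cancel_of_le hcond
    · have hfun : ⇑(Finsupp.mapDomain ⇑σ (Bex fun i => ((f i : ℕ))))
          = (fun i : Fin r => (f i : ℕ) + ((r - 1) - (i : ℕ))) ∘ ⇑σ⁻¹ :=
        funext fun j => mapDomain_bex_apply _ σ j
      show Function.Injective ⇑(Finsupp.mapDomain ⇑σ (Bex fun i => ((f i : ℕ))))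
      rw [hfun]
      exact (bex_fun_inj hf).comp σ⁻¹.injective
  · -- membership backward
    rintro ⟨a, b⟩ hx
    rw [Finset.mem_filter, Finset.HasAntidiagonal.mem_antidiagonal] at hx
    obtain ⟨hsum, hinj⟩ := hx
    simp only at hinj hsum
    have hb : ∀ jj, a jj ≤ q + (r - 1) := by
      intro jj
      have h1 : a jj + b jj = c jj := by rw [← Finsupp.add_apply, hsum]
      have h2 : c jj = q + ((r - 1) - (jj : ℕ)) := rfl
      omega
    have hle : ∀ i, sortedPart ⇑a i ≤ q := sortedPart_le hinj hb
    have hfe : (fun i : Fin r => (((⟨min (sortedPart (⇑a) i) q, by omega⟩ : Fin (q + 1))) : ℕ))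
        = sortedPart ⇑a := funext fun i => by simp [min_eq_left (hle i)]
    rw [Finset.mem_filter, Finset.mem_product, Finset.mem_filter]
    refine ⟨⟨⟨Finset.mem_univ _, ?_⟩, Finset.mem_univ _⟩, ?_⟩
    · simp only
      rw [hfe]
      exact sortedPart_antitone hinj
    · simp only
      rw [hfe, mapDomain_sortPermD hinj, fn_coe]
      calc a ≤ a + b := le_self_add
        _ = c := hsum
  · -- left inverse
    rintro ⟨f, σ⟩ hy
    rw [Finset.mem_filter] at hy
    obtain ⟨hy1, hcond⟩ := hy
    rw [Finset.mem_product, Finset.mem_filter] at hy1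
    have hf : Antitone fun i => ((f i : ℕ)) := hy1.1.2
    have hfun : ⇑(Finsupp.mapDomain ⇑σ (Bex fun i => ((f i : ℕ))))
        = fun j : Fin r => (f (σ⁻¹ j) : ℕ) + ((r - 1) - ((σ⁻¹ j : Fin r) : ℕ)) :=
      funext fun j => mapDomain_bex_apply _ σ j
    have hrec := recover_eq hf σ
    rw [← hfun] at hrec
    obtain ⟨hperm, hsp⟩ := hrec
    refine Prod.ext ?_ ?_
    · simp only
      funext i
      refine Fin.ext ?_
      show min (sortedPart (⇑(Finsupp.mapDomain ⇑σ (Bex fun i => ((f i : ℕ))))) i) q = (f i : ℕ)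
      rw [hsp]
      exact min_eq_left (Nat.lt_succ_iff.mp (f i).isLt)
    · exact hperm
  · -- right inverse
    rintro ⟨a, b⟩ hx
    rw [Finset.mem_filter, Finset.HasAntidiagonal.mem_antidiagonal] at hx
    obtain ⟨hsum, hinj⟩ := hx
    simp only at hinj hsum
    have hb : ∀ jj, a jj ≤ q + (r - 1) := by
      intro jj
      have h1 : a jj + b jj = c jj := by rw [← Finsupp.add_apply, hsum]
      have h2 : c jj = q + ((r - 1) - (jj : ℕ)) := rfl
      omega
    have hle : ∀ i, sortedPart ⇑a i ≤ q := sortedPart_le hinj hb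
    have hfe : (fun i : Fin r => (((⟨min (sortedPart (⇑a) i) q, by omega⟩ : Fin (q + 1))) : ℕ))
        = sortedPart ⇑a := funext fun i => by simp [min_eq_left (hle i)]
    have hfst : Finsupp.mapDomain ⇑(sortPermD ⇑a)
        (Bex fun i : Fin r => (((⟨min (sortedPart (⇑a) i) q, by omega⟩ : Fin (q + 1))) : ℕ)) = a := by
      rw [show (Bex fun i : Fin r => (((⟨min (sortedPart (⇑a) i) q, by omega⟩ : Fin (q + 1))) : ℕ))
          = Bex (sortedPart ⇑a) from by rw [hfe], mapDomain_sortPermD hinj, fn_coe]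
    refine Prod.ext ?_ ?_
    · exact hfst
    · show c - _ = b
      rw [hfst]
      ext jj
      rw [Finsupp.tsub_apply]
      have h1 : a jj + b jj = c jj := by rw [← Finsupp.add_apply, hsum]
      omega
  · -- term equality
    rintro ⟨f, σ⟩ _
    rfl

lemma powerSum_isSymmetric (r a : ℕ) : (powerSumMv r a).IsSymmetric := by
  intro e
  rw [powerSumMv, map_sum]
  rw [show (∑ i : Fin r, rename (⇑e) (X i ^ a)) = ∑ i : Fin r, (X (e i) ^ a : MvPolynomial (Fin r) ℤ)
    from Finset.sum_congr rfl fun i _ => by rw [map_pow, rename_X]]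
  exact Fintype.sum_equiv e _ _ fun i => rfl

lemma prodPS_isSymmetric (r : ℕ) (μ : Multiset ℕ) :
    ((μ.map (powerSumMv r)).prod).IsSymmetric := by
  induction μ using Multiset.induction_on with
  | empty => intro e; simp
  | cons a t ih =>
    rw [Multiset.map_cons, Multiset.prod_cons]
    exact (powerSum_isSymmetric r a).mul ih

lemma powerSum_isHomogeneous (r a : ℕ) : (powerSumMv r a).IsHomogeneous a :=
  IsHomogeneous.sum _ _ _ fun i _ => isHomogeneous_X_pow _ _

lemma prodPS_isHomogeneous (r : ℕ) (μ : Multiset ℕ) :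
    ((μ.map (powerSumMv r)).prod).IsHomogeneous μ.sum := by
  induction μ using Multiset.induction_on with
  | empty => simpa using isHomogeneous_one (Fin r) ℤ
  | cons a t ih =>
    rw [Multiset.map_cons, Multiset.prod_cons, Multiset.sum_cons]
    exact (powerSum_isHomogeneous r a).mul ih

lemma degree_fn (g : Fin r → ℕ) : (fn g).degree = ∑ i : Fin r, g i := by
  rw [Finsupp.degree]
  refine Finset.sum_subset (Finset.subset_univ _) fun i _ hns => ?_
  simpa using Finsupp.notMem_support_iff.mp hns

lemma degree_finsupp (d : Fin r →₀ ℕ) : d.degree = ∑ i : Fin r, d i := by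
  rw [show d = fn ⇑d from Finsupp.ext fun _ => rfl]
  exact degree_fn _

lemma coeff_bex_vanish {k : ℕ} {S : MvPolynomial (Fin r) ℤ} (hS : S.IsHomogeneous k)
    (f : Fin r → ℕ) (h : (∑ i, f i) ≠ k) :
    coeff (Bex f) (vandermondeMv r * S) = 0 := by
  rw [coeff_vander_mul]
  refine Finset.sum_eq_zero fun σ _ => ?_
  by_cases hc : Dex σ ≤ Bex f
  · rw [if_pos hc]
    rw [hS.coeff_eq_zero, mul_zero]
    rw [degree_finsupp]
    have hv : ∀ j : Fin r, (Bex f - Dex σ) j = (Bex f) j - (Dex σ) j :=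
      fun j => Finsupp.tsub_apply _ _ _
    rw [Finset.sum_congr rfl fun j _ => hv j]
    rw [Finset.sum_tsub_distrib Finset.univ (fun j _ => Finsupp.le_def.mp hc j)]
    have h1 : ∑ j : Fin r, (Bex f) j = (∑ i : Fin r, f i) + ∑ j : Fin r, ((r - 1) - (j : ℕ)) := by
      simp only [Bex, fn_apply]
      rw [Finset.sum_add_distrib]
    have h2 : ∑ j : Fin r, (Dex σ) j = ∑ j : Fin r, ((r - 1) - (j : ℕ)) := by
      have e1 : ∑ j : Fin r, (Dex σ) j = ∑ j : Fin r, (j : ℕ) := by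
        rw [Finset.sum_congr rfl fun j _ =>
          (rfl : (Dex σ) j = ((((Fin.revPerm : Perm (Fin r)).trans σ⁻¹) j : Fin r) : ℕ))]
        exact Equiv.sum_comp ((Fin.revPerm : Perm (Fin r)).trans σ⁻¹) fun x : Fin r => (x : ℕ)
      have e2 : ∑ j : Fin r, ((r - 1) - (j : ℕ)) = ∑ j : Fin r, (j : ℕ) := by
        rw [← Equiv.sum_comp (Fin.revPerm : Perm (Fin r)) fun x : Fin r => (x : ℕ)]
        refine Finset.sum_congr rfl fun j _ => ?_
        simp only [Fin.revPerm_apply, Fin.val_rev]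
        omega
      rw [e1, e2]
    have h3 : ∑ j : Fin r, (Dex σ) j ≤ ∑ j : Fin r, (Bex f) j :=
      Finset.sum_le_sum fun j _ => Finsupp.le_def.mp hc j
    omega
  · rw [if_neg hc, mul_zero]

lemma symChar_eq {L : List ℕ} {r : ℕ} (h : L.length = r) (g : Fin r → ℕ)
    (hg : ∀ i : Fin r, L.get (Fin.cast h.symm i) = g i) (μ : Multiset ℕ) :
    symChar L μ = coeff (Bex g) (vandermondeMv r * (μ.map (powerSumMv r)).prod) := by
  subst h
  rw [symChar]
  congr 1
  ext i
  show L.get i + (L.length - 1 - (i : ℕ)) = g i + ((L.length - 1) - (i : ℕ))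
  rw [← hg i]
  rfl

end RectAux

open RectAux in
open scoped Classical in
/-- For `p, q ≥ 1` and `μ ⊢ k` with `k ≤ pq`:
`χ^{p×q}(μ,1^{pq-k}) = ∑_{λ ⊆ p×q, λ ⊢ k} χ^λ(μ) f^{λ̃}`, where a partition `λ ⊆ p×q` is
encoded as an antitone function `f : Fin p → Fin (q+1)` (its parts, zeros allowed), the
complement is `λ̃_i = q - λ_{p+1-i}`, and `f^ν = χ^ν(1^N)` counts standard Young tableaux. -/
theorem rectangular_character_as_sum_over_contained_partitions
    (p q k : ℕ) (hp : 1 ≤ p) (hq : 1 ≤ q) (hk : k ≤ p * q) (μ : Nat.Partition k) :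
    symChar (List.replicate p q) (μ.parts + Multiset.replicate (p * q - k) 1)
      = ∑ f ∈ Finset.univ.filter
            (fun f : Fin p → Fin (q + 1) =>
              (Antitone fun i => (f i : ℕ)) ∧ ∑ i, (f i : ℕ) = k),
          symChar (List.ofFn fun i => (f i : ℕ)) μ.parts
            * symChar (List.ofFn fun i : Fin p => q - (f i.rev : ℕ))
                (Multiset.replicate (p * q - k) 1) := by
  classical
  set m := p * q - k with hm
  set S := (μ.parts.map (powerSumMv p)).prod with hSdef
  set T := ((Multiset.replicate m 1).map (powerSumMv p)).prod with hTdef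
  have hS : S.IsSymmetric := prodPS_isSymmetric p μ.parts
  have hT : T.IsSymmetric := prodPS_isSymmetric p _
  have hL : symChar (List.replicate p q) (μ.parts + Multiset.replicate m 1)
      = coeff (fn fun j : Fin p => q + ((p - 1) - (j : ℕ))) (vandermondeMv p * S * T) := by
    rw [symChar_eq (show (List.replicate p q).length = p by simp) (fun _ : Fin p => q)
      (fun i => by simp) (μ.parts + Multiset.replicate m 1)]
    rw [Multiset.map_add, Multiset.prod_add, ← mul_assoc, ← hSdef, ← hTdef]
    rfl
  have hterm : ∀ f : Fin p → Fin (q + 1),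
      symChar (List.ofFn fun i => (f i : ℕ)) μ.parts
          * symChar (List.ofFn fun i : Fin p => q - (f i.rev : ℕ)) (Multiset.replicate m 1)
        = coeff (Bex fun i => ((f i : ℕ))) (vandermondeMv p * S)
          * coeff (Cex q fun i => ((f i : ℕ))) (vandermondeMv p * T) := by
    intro f
    congr 1
    · exact symChar_eq (by simp) _ (fun i => by simp) μ.parts
    · exact symChar_eq (by simp) _ (fun i => by simp) (Multiset.replicate m 1)
  rw [hL, main_expand p q hS hT]
  rw [Finset.sum_congr rfl fun f _ => hterm f]
  refine (Finset.sum_subset ?_ ?_).symm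
  · intro f hf
    simp only [Finset.mem_filter, Finset.mem_univ, true_and] at hf ⊢
    exact hf.1
  · intro f hf hnf
    simp only [Finset.mem_filter, Finset.mem_univ, true_and] at hf hnf
    have hk' : (∑ i, ((f i : ℕ))) ≠ k := fun hc => hnf ⟨hf, hc⟩
    have hhom : S.IsHomogeneous k := by
      have := prodPS_isHomogeneous p μ.parts
      rwa [μ.parts_sum] at this
    rw [coeff_bex_vanish hhom _ hk', zero_mul]
end

section
/- For m = 1, write G_k(p;q) for the leading-terms polynomial of F_k(p;q). Then for every k ≥ 1, (−1)^k G_k(p; −q) = Σ_{i=1}^k N(k,i) p^{k+1−i} q^i, where N(k,i) = (1/k)·binom(k,i)·binom(k,i−1) is the Narayana number. -/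
open Polynomial Finset

/-- `[x^{-1}] R(x)`: the coefficient of `x^{-1}` in the expansion of the rational
function `N(x)/D(x)` in descending powers of `x` (Taylor series at `x = ∞`). -/
noncomputable def coeffXinv (N D : Polynomial ℚ) : ℚ :=
  PowerSeries.coeff (R := ℚ) (1 + N.natDegree - D.natDegree)
    ((N.reverse : PowerSeries ℚ) * (D.reverse : PowerSeries ℚ)⁻¹)

lemma coeff_comp_C_mul_X (g : Polynomial ℚ) (c : ℚ) (a : ℕ) :
    (g.comp (C c * X)).coeff a = g.coeff a * c ^ a := by
  induction g using Polynomial.induction_on' with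
  | add p q hp hq => simp [add_comp, hp, hq, add_mul]
  | monomial m b =>
    rw [monomial_comp, mul_pow, ← C_pow, ← mul_assoc, ← C_mul]
    simp only [C_mul_X_pow_eq_monomial, coeff_monomial]
    split_ifs with h
    · subst h; ring
    · ring

lemma coeff_comp_linear (f : Polynomial ℚ) (u r : ℚ) (a : ℕ) :
    (f.comp (C u - C r * X)).coeff a = (-r)^a * (Polynomial.hasseDeriv a f).eval u := by
  have h1 : C u - C r * X = (X + C u).comp (C (-r) * X) := by
    simp [add_comp, X_comp, C_comp]; ring
  rw [h1, ← comp_assoc, ← taylor_apply, coeff_comp_C_mul_X, taylor_coeff]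
  ring

lemma hasse_const (g : Polynomial ℚ) (n : ℕ) (h : g.natDegree ≤ n) :
    Polynomial.hasseDeriv n g = C (g.coeff n) := by
  ext m
  rw [Polynomial.hasseDeriv_coeff, coeff_C]
  cases m with
  | zero => simp
  | succ m =>
    simp only [Nat.succ_ne_zero, if_false]
    rw [Polynomial.coeff_eq_zero_of_natDegree_lt (by omega), mul_zero]

lemma delta_coeff (g : Polynomial ℚ) (n : ℕ) (h : g.natDegree ≤ n + 1) :
    (Polynomial.taylor 1 g - g).coeff n = (n + 1 : ℚ) * g.coeff (n + 1) := by
  rw [coeff_sub, taylor_coeff]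
  set p := Polynomial.hasseDeriv n g with hp
  have hd := Polynomial.natDegree_hasseDeriv_le g n
  rw [← hp] at hd
  have hdeg : p.natDegree < 2 := by omega
  have he : p.eval 1 = p.coeff 0 + p.coeff 1 := by
    rw [Polynomial.eval_eq_sum_range' hdeg]
    simp [Finset.sum_range_succ]
  have h0 : p.coeff 0 = g.coeff n := by
    rw [hp, Polynomial.hasseDeriv_coeff]; simp
  have h1 : p.coeff 1 = (n + 1 : ℚ) * g.coeff (n + 1) := by
    rw [hp, Polynomial.hasseDeriv_coeff, add_comm 1 n, Nat.choose_succ_self_right]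
    push_cast; ring
  rw [he, h0, h1]; ring

lemma delta_natDegree (g : Polynomial ℚ) (n : ℕ) (h : g.natDegree ≤ n + 1) :
    (Polynomial.taylor 1 g - g).natDegree ≤ n := by
  rw [Polynomial.natDegree_le_iff_coeff_eq_zero]
  intro m hm
  rw [coeff_sub, taylor_coeff, hasse_const g m (by omega)]
  simp

lemma findiff : ∀ n : ℕ, ∀ g : Polynomial ℚ, g.natDegree ≤ n →
    ∑ j ∈ Finset.range (n + 1), (-1 : ℚ) ^ (n + j) * (n.choose j : ℚ) * g.eval (j : ℚ)
      = (Nat.factorial n : ℚ) * g.coeff n := by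
  intro n
  induction n with
  | zero =>
    intro g hg
    rw [Polynomial.eq_C_of_natDegree_le_zero hg]
    simp
  | succ n ih =>
    intro g hg
    set A := ∑ x ∈ range (n+1), (-1:ℚ)^(n+x) * (n.choose (x+1) : ℚ) * g.eval ((x:ℚ)+1) with hA
    set B := ∑ x ∈ range (n+1), (-1:ℚ)^(n+x) * (n.choose x : ℚ) * g.eval (x:ℚ) with hB
    have hAB : A = -B + (-1:ℚ)^n * g.eval 0 := by
      have hA' : A = ∑ x ∈ range n, (-1:ℚ)^(n+x) * (n.choose (x+1):ℚ) * g.eval ((x:ℚ)+1) := by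
        rw [hA, Finset.sum_range_succ, Nat.choose_succ_self]
        simp
      have hB' : B = (∑ x ∈ range n, (-1:ℚ)^(n+(x+1)) * (n.choose (x+1):ℚ) * g.eval ((x:ℚ)+1))
          + (-1:ℚ)^n * g.eval 0 := by
        rw [hB, Finset.sum_range_succ' (fun x => (-1:ℚ)^(n+x) * (n.choose x:ℚ) * g.eval (x:ℚ)) n]
        congr 1
        · apply Finset.sum_congr rfl; intro x hx; push_cast; ring
        · simp
      have hS : ∑ x ∈ range n, (-1:ℚ)^(n+x) * (n.choose (x+1):ℚ) * g.eval ((x:ℚ)+1)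
          = -∑ x ∈ range n, (-1:ℚ)^(n+(x+1)) * (n.choose (x+1):ℚ) * g.eval ((x:ℚ)+1) := by
        rw [← Finset.sum_neg_distrib]
        apply Finset.sum_congr rfl; intro x hx; ring
      rw [hA', hB', hS]; ring
    have L : (∑ j ∈ range (n + 2), (-1:ℚ)^(n+1+j) * ((n+1).choose j : ℚ) * g.eval (j:ℚ))
        = (∑ x ∈ range (n+1), (-1:ℚ)^(n+x) * ((n.choose x : ℚ) + (n.choose (x+1) : ℚ)) * g.eval ((x:ℚ)+1))
          + (-1:ℚ)^(n+1) * g.eval 0 := by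
      rw [Finset.sum_range_succ' (fun j => (-1:ℚ)^(n+1+j) * ((n+1).choose j : ℚ) * g.eval (j:ℚ)) (n+1)]
      congr 1
      · apply Finset.sum_congr rfl; intro x hx
        rw [Nat.choose_succ_succ]
        push_cast; ring
      · simp
    have R : (∑ x ∈ range (n+1), (-1:ℚ)^(n+x) * (n.choose x : ℚ)
          * ((Polynomial.taylor 1 g - g).eval (x:ℚ)))
        = (∑ x ∈ range (n+1), (-1:ℚ)^(n+x) * (n.choose x : ℚ) * g.eval ((x:ℚ)+1)) - B := by
      rw [hB, ← Finset.sum_sub_distrib]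
      apply Finset.sum_congr rfl; intro x hx
      rw [eval_sub, Polynomial.taylor_eval]
      ring
    have key : (∑ j ∈ range (n + 2), (-1:ℚ)^(n+1+j) * ((n+1).choose j : ℚ) * g.eval (j:ℚ))
        = ∑ x ∈ range (n+1), (-1:ℚ)^(n+x) * (n.choose x : ℚ)
            * ((Polynomial.taylor 1 g - g).eval (x:ℚ)) := by
      rw [L, R]
      have split : (∑ x ∈ range (n+1), (-1:ℚ)^(n+x) * ((n.choose x : ℚ) + (n.choose (x+1) : ℚ)) * g.eval ((x:ℚ)+1))
          = (∑ x ∈ range (n+1), (-1:ℚ)^(n+x) * (n.choose x : ℚ) * g.eval ((x:ℚ)+1)) + A := by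
        rw [hA, ← Finset.sum_add_distrib]
        apply Finset.sum_congr rfl; intro x hx; ring
      rw [split, hAB]; ring
    rw [key, ih _ (delta_natDegree g n hg), delta_coeff g n hg, Nat.factorial_succ]
    push_cast; ring

lemma coeffXinv_eq (N D : Polynomial ℚ) (hD : D.Monic)
    (h1 : 1 ≤ D.natDegree) (h2 : D.natDegree ≤ N.natDegree) :
    coeffXinv N D = (N %ₘ D).coeff (D.natDegree - 1) := by
  obtain ⟨n, hn⟩ : ∃ n, N.natDegree = n := ⟨_, rfl⟩
  obtain ⟨d, hd⟩ : ∃ d, D.natDegree = d := ⟨_, rfl⟩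
  rw [hn, hd] at h2; rw [hd] at h1
  set Q := N /ₘ D with hQ
  set R := N %ₘ D with hR
  have hN0 : N ≠ 0 := by
    intro h; rw [h] at hn; simp at hn; omega
  have hQ0 : Q ≠ 0 := by
    rw [hQ, Ne, Polynomial.divByMonic_eq_zero_iff hD, not_lt]
    rw [Polynomial.degree_eq_natDegree hD.ne_zero, Polynomial.degree_eq_natDegree hN0, hn, hd]
    exact_mod_cast h2
  have hQdeg : Q.natDegree = n - d := by
    rw [hQ, Polynomial.natDegree_divByMonic N hD, hn, hd]
  have key : N = R + D * Q := (Polynomial.modByMonic_add_div N D).symm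
  have hDQdeg : (D * Q).natDegree = n := by
    rw [Polynomial.natDegree_mul hD.ne_zero hQ0, hQdeg, hd]; omega
  have hRdeg : R.natDegree ≤ d - 1 := by
    rcases eq_or_ne R 0 with h | h
    · rw [h]; simp
    · have h3 := Polynomial.degree_modByMonic_lt N hD
      rw [← hR] at h3
      have h4 := Polynomial.natDegree_lt_natDegree h h3
      omega
  have hrevpoly : N.reverse = Polynomial.reflect n R + D.reverse * Q.reverse := by
    calc N.reverse = Polynomial.reflect n N := by rw [Polynomial.reverse, hn]
      _ = Polynomial.reflect n (R + D * Q) := by rw [← key]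
      _ = Polynomial.reflect n R + Polynomial.reflect n (D * Q) := by
          rw [Polynomial.reflect_add]
      _ = Polynomial.reflect n R + (D * Q).reverse := by rw [Polynomial.reverse, hDQdeg]
      _ = Polynomial.reflect n R + D.reverse * Q.reverse := by
          rw [Polynomial.reverse_mul_of_domain]
  have hconst : PowerSeries.constantCoeff (D.reverse : PowerSeries ℚ) ≠ 0 := by
    rw [← PowerSeries.coeff_zero_eq_constantCoeff_apply, Polynomial.coeff_coe,
      Polynomial.coeff_zero_reverse, hD.leadingCoeff]
    exact one_ne_zero
  have hinv : (D.reverse : PowerSeries ℚ) * (D.reverse : PowerSeries ℚ)⁻¹ = 1 :=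
    PowerSeries.mul_inv_cancel _ hconst
  have hidx : 1 + n - d = (n - d) + 1 := by omega
  rw [coeffXinv, hn, hd, hidx, hrevpoly]
  push_cast [Polynomial.coe_add, Polynomial.coe_mul]
  have hsplit : (((Polynomial.reflect n R : Polynomial ℚ) : PowerSeries ℚ)
        + (D.reverse : PowerSeries ℚ) * (Q.reverse : PowerSeries ℚ)) * (D.reverse : PowerSeries ℚ)⁻¹
      = ((Polynomial.reflect n R : Polynomial ℚ) : PowerSeries ℚ) * (D.reverse : PowerSeries ℚ)⁻¹
        + (Q.reverse : PowerSeries ℚ) := by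
    rw [add_mul, mul_comm (D.reverse : PowerSeries ℚ) (Q.reverse : PowerSeries ℚ), mul_assoc,
      hinv, mul_one]
  rw [hsplit, map_add]
  have hQrev : (PowerSeries.coeff (n - d + 1)) ((Q.reverse : Polynomial ℚ) : PowerSeries ℚ) = 0 := by
    rw [Polynomial.coeff_coe]
    apply Polynomial.coeff_eq_zero_of_natDegree_lt
    have := Q.reverse_natDegree_le
    omega
  rw [hQrev, add_zero]
  rw [PowerSeries.coeff_mul, Finset.Nat.sum_antidiagonal_eq_sum_range_succ_mk]
  rw [Finset.sum_eq_single (n - d + 1)]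
  · rw [Polynomial.coeff_coe, Polynomial.coeff_reflect, Nat.sub_self,
      Polynomial.revAt_le (by omega)]
    have : n - (n - d + 1) = d - 1 := by omega
    rw [this]
    have hc0 : (PowerSeries.coeff 0) (D.reverse : PowerSeries ℚ)⁻¹ = 1 := by
      rw [PowerSeries.coeff_zero_eq_constantCoeff_apply, PowerSeries.constantCoeff_inv]
      rw [← PowerSeries.coeff_zero_eq_constantCoeff_apply, Polynomial.coeff_coe,
        Polynomial.coeff_zero_reverse, hD.leadingCoeff]
      norm_num
    rw [hc0, mul_one]
  · intro i hi hne
    have hi' : i < n - d + 1 := by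
      rcases lt_or_eq_of_le (Nat.lt_succ_iff.mp (Finset.mem_range.mp hi)) with h | h
      · exact h
      · exact absurd h hne
    have : (PowerSeries.coeff i) ((Polynomial.reflect n R : Polynomial ℚ) : PowerSeries ℚ) = 0 := by
      rw [Polynomial.coeff_coe, Polynomial.coeff_reflect, Polynomial.revAt_le (by omega)]
      apply Polynomial.coeff_eq_zero_of_natDegree_lt
      omega
    rw [this, zero_mul]
  · intro h
    exact absurd (Finset.self_mem_range_succ _) h

lemma dp_prod (k : ℕ) : descPochhammer ℚ k = ∏ i ∈ Finset.range k, (X - C (i : ℚ)) := by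
  induction k with
  | zero => simp
  | succ k ih =>
    rw [descPochhammer_succ_right, ih, Finset.prod_range_succ]
    norm_cast

lemma dp_comp_prod (k : ℕ) (c : ℚ) :
    (descPochhammer ℚ k).comp (X - C c) = ∏ i ∈ Finset.range k, (X - C (c + i)) := by
  rw [dp_prod, Polynomial.prod_comp]
  apply Finset.prod_congr rfl
  intro i _
  rw [sub_comp, X_comp, C_comp, C_add]
  ring

lemma dp_comp_monic (k : ℕ) (c : ℚ) : ((descPochhammer ℚ k).comp (X - C c)).Monic := by
  rw [dp_comp_prod]
  exact monic_prod_of_monic _ _ fun i _ => monic_X_sub_C _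

lemma dp_comp_natDegree (k : ℕ) (c : ℚ) :
    ((descPochhammer ℚ k).comp (X - C c)).natDegree = k := by
  rw [Polynomial.natDegree_comp, descPochhammer_natDegree, natDegree_X_sub_C, mul_one]

lemma coeffXinv_formula (k : ℕ) (hk : 1 ≤ k) (a b : ℚ) :
    coeffXinv (descPochhammer ℚ k * (descPochhammer ℚ k).comp (X - C a))
        ((descPochhammer ℚ k).comp (X - C b))
      = (1 / (Nat.factorial (k-1) : ℚ)) * ∑ j ∈ Finset.range k,
          (-1 : ℚ) ^ (k - 1 + j) * ((k-1).choose j : ℚ)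
            * ((descPochhammer ℚ k).eval ((j : ℚ) + b)
                * (descPochhammer ℚ k).eval ((j : ℚ) + b - a)) := by
  set N := descPochhammer ℚ k * (descPochhammer ℚ k).comp (X - C a) with hN
  set D := (descPochhammer ℚ k).comp (X - C b) with hD
  have hDm : D.Monic := dp_comp_monic k b
  have hDdeg : D.natDegree = k := dp_comp_natDegree k b
  have hNm : N.Monic := (monic_descPochhammer ℚ k).mul (dp_comp_monic k a)
  have hNdeg : N.natDegree = 2 * k := by
    rw [hN, Polynomial.natDegree_mul (monic_descPochhammer ℚ k).ne_zero (dp_comp_monic k a).ne_zero,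
      descPochhammer_natDegree, dp_comp_natDegree]
    omega
  set R := N %ₘ D with hR
  have hRdeg : R.natDegree ≤ k - 1 := by
    rcases eq_or_ne R 0 with h | h
    · rw [h]; simp
    · have h3 := Polynomial.degree_modByMonic_lt N hDm
      rw [← hR] at h3
      have h4 := Polynomial.natDegree_lt_natDegree h h3
      omega
  have hRevals : ∀ j ∈ Finset.range k, R.eval ((j:ℚ) + b)
      = (descPochhammer ℚ k).eval ((j : ℚ) + b) * (descPochhammer ℚ k).eval ((j : ℚ) + b - a) := by
    intro j hj
    have key : N = R + D * (N /ₘ D) := (Polynomial.modByMonic_add_div N D).symm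
    have hDz : D.eval ((j:ℚ) + b) = 0 := by
      rw [hD, dp_comp_prod, eval_prod]
      apply Finset.prod_eq_zero hj
      rw [eval_sub, eval_X, eval_C]
      ring
    have : N.eval ((j:ℚ) + b) = R.eval ((j:ℚ) + b) := by
      rw [key]; rw [eval_add, eval_mul, hDz, zero_mul, add_zero]
    rw [← this, hN, eval_mul, eval_comp, eval_sub, eval_X, eval_C]
  rw [coeffXinv_eq N D hDm (by omega) (by rw [hNdeg, hDdeg]; omega), hDdeg, ← hR]
  have htc : (Polynomial.taylor b R).coeff (k-1) = R.coeff (k-1) := by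
    rw [taylor_coeff, hasse_const R (k-1) hRdeg, eval_C]
  have hfd := findiff (k-1) (Polynomial.taylor b R) (by rw [Polynomial.natDegree_taylor]; exact hRdeg)
  rw [htc] at hfd
  have hrange : (k - 1) + 1 = k := by omega
  rw [hrange] at hfd
  have hsum : ∑ j ∈ Finset.range k,
      (-1 : ℚ) ^ (k - 1 + j) * ((k-1).choose j : ℚ)
        * ((descPochhammer ℚ k).eval ((j : ℚ) + b)
            * (descPochhammer ℚ k).eval ((j : ℚ) + b - a))
      = ∑ j ∈ Finset.range k, (-1 : ℚ) ^ (k - 1 + j) * ((k-1).choose j : ℚ)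
          * (Polynomial.taylor b R).eval (j : ℚ) := by
    apply Finset.sum_congr rfl
    intro j hj
    rw [Polynomial.taylor_eval, ← hRevals j hj]
  rw [hsum, hfd]
  have hfac : (Nat.factorial (k-1) : ℚ) ≠ 0 := by positivity
  field_simp

lemma eval_scale (F : MvPolynomial (Fin 2) ℚ) (M : ℕ) (hM : F.totalDegree < M)
    (t : ℚ) (v : Fin 2 → ℚ) :
    MvPolynomial.eval (fun i => t * v i) F
      = ∑ d ∈ Finset.range M, t ^ d
          * MvPolynomial.eval v (MvPolynomial.homogeneousComponent d F) := by
  have hRHS : ∀ d, MvPolynomial.eval v (MvPolynomial.homogeneousComponent d F)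
      = ∑ m ∈ F.support, (if m.degree = d then MvPolynomial.coeff m F * ∏ i ∈ m.support, v i ^ m i else 0) := by
    intro d
    rw [MvPolynomial.homogeneousComponent_apply, map_sum, Finset.sum_filter]
    apply Finset.sum_congr rfl
    intro m _
    split_ifs with h
    · rw [MvPolynomial.eval_monomial]
      rfl
    · rfl
  simp_rw [hRHS, Finset.mul_sum]
  rw [Finset.sum_comm]
  rw [MvPolynomial.eval_eq]
  apply Finset.sum_congr rfl
  intro m hm
  have hdm : m.degree ∈ Finset.range M := by
    rw [Finset.mem_range]
    have := MvPolynomial.le_totalDegree hm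
    have hdeq : m.degree = m.sum fun _ e => e := by
      rw [Finsupp.degree]; rfl
    omega
  rw [Finset.sum_eq_single m.degree]
  · rw [if_pos rfl]
    have : ∏ i ∈ m.support, (t * v i) ^ m i
        = t ^ m.degree * ∏ i ∈ m.support, v i ^ m i := by
      simp_rw [mul_pow]
      rw [Finset.prod_mul_distrib, Finset.prod_pow_eq_pow_sum]
      rfl
    rw [this]; ring
  · intro d _ hne
    rw [if_neg (fun h => hne h.symm), mul_zero]
  · intro h; exact absurd hdm h

lemma hasse_dp_zero (k c : ℕ) (hc : k < c) :
    Polynomial.hasseDeriv c (descPochhammer ℚ k) = 0 := by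
  rw [hasse_const _ c (by rw [descPochhammer_natDegree]; omega),
    Polynomial.coeff_eq_zero_of_natDegree_lt (by rw [descPochhammer_natDegree]; omega)]
  simp

lemma hasse_dp_coeff (k c : ℕ) (hc : c ≤ k) :
    (Polynomial.hasseDeriv c (descPochhammer ℚ k)).coeff (k - c) = (k.choose c : ℚ) := by
  rw [Polynomial.hasseDeriv_coeff]
  have h1 : k - c + c = k := by omega
  rw [h1]
  have h2 : (descPochhammer ℚ k).coeff k = 1 := by
    have := (monic_descPochhammer ℚ k).coeff_natDegree
    rwa [descPochhammer_natDegree] at this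
  rw [h2, mul_one]

lemma hasse_dp_natDegree (k c : ℕ) (hc : c ≤ k) :
    (Polynomial.hasseDeriv c (descPochhammer ℚ k)).natDegree = k - c := by
  apply le_antisymm
  · have := Polynomial.natDegree_hasseDeriv_le (descPochhammer ℚ k) c
    rw [descPochhammer_natDegree] at this
    exact this
  · apply Polynomial.le_natDegree_of_ne_zero
    rw [hasse_dp_coeff k c hc]
    have := Nat.choose_pos hc
    positivity

lemma narayana_inner_sum (k : ℕ) (hk : 1 ≤ k) (a b : ℕ) (hab : a + b = k + 1) :
    ∑ j ∈ Finset.range k, (-1:ℚ)^(k-1+j) * ((k-1).choose j : ℚ)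
        * ((Polynomial.hasseDeriv a (descPochhammer ℚ k)).eval (j:ℚ)
            * (Polynomial.hasseDeriv b (descPochhammer ℚ k)).eval (j:ℚ))
      = (Nat.factorial (k-1) : ℚ) * (k.choose a : ℚ) * (k.choose b : ℚ) := by
  by_cases ha : a ≤ k
  swap
  · rw [Nat.choose_eq_zero_of_lt (by omega)]
    simp [hasse_dp_zero k a (by omega)]
  by_cases hb : b ≤ k
  swap
  · rw [Nat.choose_eq_zero_of_lt (show k < b by omega)]
    simp [hasse_dp_zero k b (by omega)]
  set g := Polynomial.hasseDeriv a (descPochhammer ℚ k)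
      * Polynomial.hasseDeriv b (descPochhammer ℚ k) with hg
  have hgd : g.natDegree ≤ k - 1 := by
    apply le_trans (Polynomial.natDegree_mul_le)
    rw [hasse_dp_natDegree k a ha, hasse_dp_natDegree k b hb]
    omega
  have hgc : g.coeff (k - 1) = (k.choose a : ℚ) * (k.choose b : ℚ) := by
    have hidx : k - 1 = (Polynomial.hasseDeriv a (descPochhammer ℚ k)).natDegree
        + (Polynomial.hasseDeriv b (descPochhammer ℚ k)).natDegree := by
      rw [hasse_dp_natDegree k a ha, hasse_dp_natDegree k b hb]; omega
    rw [hg, hidx, Polynomial.coeff_mul_degree_add_degree]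
    rw [Polynomial.leadingCoeff, Polynomial.leadingCoeff,
      hasse_dp_natDegree k a ha, hasse_dp_natDegree k b hb,
      hasse_dp_coeff k a ha, hasse_dp_coeff k b hb]
  have hfd := findiff (k-1) g hgd
  have hrange : (k - 1) + 1 = k := by omega
  rw [hrange] at hfd
  calc ∑ j ∈ Finset.range k, (-1:ℚ)^(k-1+j) * ((k-1).choose j : ℚ)
        * ((Polynomial.hasseDeriv a (descPochhammer ℚ k)).eval (j:ℚ)
            * (Polynomial.hasseDeriv b (descPochhammer ℚ k)).eval (j:ℚ))
      = ∑ j ∈ Finset.range k, (-1:ℚ)^(k-1+j) * ((k-1).choose j : ℚ) * g.eval (j:ℚ) := by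
        apply Finset.sum_congr rfl; intro j _; rw [hg, Polynomial.eval_mul]
    _ = (Nat.factorial (k-1) : ℚ) * g.coeff (k-1) := hfd
    _ = (Nat.factorial (k-1) : ℚ) * (k.choose a : ℚ) * (k.choose b : ℚ) := by
        rw [hgc]; ring

lemma main_scalar (k : ℕ) (hk : 1 ≤ k) (F : MvPolynomial (Fin 2) ℚ)
    (hF : ∀ pv qv : ℚ,
      MvPolynomial.eval ![pv, qv] F
        = -(1 / (k : ℚ)) * coeffXinv
            (descPochhammer ℚ k *
              (descPochhammer ℚ k).comp (Polynomial.X - Polynomial.C (qv + pv)))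
            ((descPochhammer ℚ k).comp (Polynomial.X - Polynomial.C qv)))
    (p q : ℚ) :
    MvPolynomial.eval ![p, -q] (MvPolynomial.homogeneousComponent (k+1) F)
      = ((-1:ℚ)^k / (k:ℚ)) * ∑ ij ∈ Finset.HasAntidiagonal.antidiagonal (k+1),
          (k.choose ij.1 : ℚ) * (k.choose ij.2 : ℚ) * q ^ ij.1 * p ^ ij.2 := by
  set v : Fin 2 → ℚ := ![p, -q] with hv
  set M := max (F.totalDegree + 1) (k + 2) with hM
  set Ψ : Polynomial ℚ := ∑ d ∈ Finset.range M,
      C (MvPolynomial.eval v (MvPolynomial.homogeneousComponent d F)) * X ^ d with hΨ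
  set Φ : Polynomial ℚ := C ((-(1/(k:ℚ))) * (1/(Nat.factorial (k-1) : ℚ)))
      * ∑ j ∈ Finset.range k, C ((-1:ℚ)^(k-1+j) * ((k-1).choose j : ℚ))
          * ((descPochhammer ℚ k).comp (C (j:ℚ) - C q * X)
              * (descPochhammer ℚ k).comp (C (j:ℚ) - C p * X)) with hΦ
  have hΨc : Ψ.coeff (k+1) = MvPolynomial.eval v (MvPolynomial.homogeneousComponent (k+1) F) := by
    rw [hΨ, Polynomial.finset_sum_coeff]
    rw [Finset.sum_eq_single (k+1)]
    · rw [Polynomial.coeff_C_mul, Polynomial.coeff_X_pow, if_pos rfl, mul_one]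
    · intro d _ hne
      rw [Polynomial.coeff_C_mul, Polynomial.coeff_X_pow, if_neg (fun h => hne h.symm), mul_zero]
    · intro h
      exact absurd (Finset.mem_range.mpr (by omega)) h
  have hΨΦ : Ψ = Φ := by
    apply Polynomial.funext
    intro t
    have hL : Ψ.eval t = MvPolynomial.eval (fun i => t * v i) F := by
      rw [eval_scale F M (by omega) t v, hΨ]
      rw [Polynomial.eval_finset_sum]
      apply Finset.sum_congr rfl
      intro d _
      rw [Polynomial.eval_mul, Polynomial.eval_C, Polynomial.eval_pow, Polynomial.eval_X]
      ring
    have hvt : (fun i => t * v i) = ![t * p, -(t * q)] := by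
      funext i
      fin_cases i <;> simp [hv] <;> ring
    rw [hL, hvt, hF (t * p) (-(t * q)), coeffXinv_formula k hk (-(t * q) + t * p) (-(t * q))]
    have hsum : ∑ j ∈ Finset.range k,
        (C ((-1:ℚ)^(k-1+j) * ((k-1).choose j : ℚ))
          * ((descPochhammer ℚ k).comp (C (j:ℚ) - C q * X)
              * (descPochhammer ℚ k).comp (C (j:ℚ) - C p * X))).eval t
        = ∑ j ∈ Finset.range k, (-1:ℚ)^(k-1+j) * ((k-1).choose j : ℚ)
            * ((descPochhammer ℚ k).eval ((j:ℚ) + -(t*q))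
                * (descPochhammer ℚ k).eval ((j:ℚ) + -(t*q) - (-(t*q) + t*p))) := by
      apply Finset.sum_congr rfl
      intro j _
      rw [Polynomial.eval_mul, Polynomial.eval_C, Polynomial.eval_mul,
        Polynomial.eval_comp, Polynomial.eval_comp]
      simp only [Polynomial.eval_sub, Polynomial.eval_mul, Polynomial.eval_C, Polynomial.eval_X]
      have e1 : (j : ℚ) + -(t * q) = (j:ℚ) - q * t := by ring
      have e2 : (j : ℚ) + -(t * q) - (-(t * q) + t * p) = (j:ℚ) - p * t := by ring
      rw [e2, e1]
    rw [hΦ, Polynomial.eval_mul, Polynomial.eval_C, Polynomial.eval_finset_sum, hsum]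
    ring
  have hΦc : Φ.coeff (k+1) = ((-1:ℚ)^k / (k:ℚ)) * ∑ ij ∈ Finset.HasAntidiagonal.antidiagonal (k+1),
      (k.choose ij.1 : ℚ) * (k.choose ij.2 : ℚ) * q ^ ij.1 * p ^ ij.2 := by
    rw [hΦ, Polynomial.coeff_C_mul, Polynomial.finset_sum_coeff]
    have hterm : ∀ j ∈ Finset.range k,
        (C ((-1:ℚ)^(k-1+j) * ((k-1).choose j : ℚ))
          * ((descPochhammer ℚ k).comp (C (j:ℚ) - C q * X)
              * (descPochhammer ℚ k).comp (C (j:ℚ) - C p * X))).coeff (k+1)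
        = ∑ ij ∈ Finset.HasAntidiagonal.antidiagonal (k+1),
            (-1:ℚ)^(k-1+j) * ((k-1).choose j : ℚ)
              * ((-q)^ij.1 * (Polynomial.hasseDeriv ij.1 (descPochhammer ℚ k)).eval (j:ℚ)
                * ((-p)^ij.2 * (Polynomial.hasseDeriv ij.2 (descPochhammer ℚ k)).eval (j:ℚ))) := by
      intro j _
      rw [Polynomial.coeff_C_mul, Polynomial.coeff_mul, Finset.mul_sum]
      apply Finset.sum_congr rfl
      intro ij _
      rw [coeff_comp_linear, coeff_comp_linear]
    rw [Finset.sum_congr rfl hterm, Finset.sum_comm]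
    have hinner : ∀ ij ∈ Finset.HasAntidiagonal.antidiagonal (k+1),
        (∑ j ∈ Finset.range k, (-1:ℚ)^(k-1+j) * ((k-1).choose j : ℚ)
          * ((-q)^ij.1 * (Polynomial.hasseDeriv ij.1 (descPochhammer ℚ k)).eval (j:ℚ)
            * ((-p)^ij.2 * (Polynomial.hasseDeriv ij.2 (descPochhammer ℚ k)).eval (j:ℚ))))
        = (-q)^ij.1 * (-p)^ij.2 * ((Nat.factorial (k-1) : ℚ) * (k.choose ij.1 : ℚ) * (k.choose ij.2 : ℚ)) := by
      intro ij hij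
      rw [← narayana_inner_sum k hk ij.1 ij.2 (Finset.HasAntidiagonal.mem_antidiagonal.mp hij), Finset.mul_sum]
      apply Finset.sum_congr rfl
      intro j _
      ring
    rw [Finset.sum_congr rfl hinner]
    rw [Finset.mul_sum, Finset.mul_sum]
    apply Finset.sum_congr rfl
    intro ij hij
    have hab := Finset.HasAntidiagonal.mem_antidiagonal.mp hij
    have hsign : (-q : ℚ)^ij.1 * (-p)^ij.2 = (-1:ℚ)^(k+1) * q^ij.1 * p^ij.2 := by
      rw [neg_pow, neg_pow, ← hab]
      ring
    rw [hsign]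
    have hfac : (Nat.factorial (k-1) : ℚ) ≠ 0 := by positivity
    have hk0 : (k : ℚ) ≠ 0 := by positivity
    field_simp
    ring
  rw [← hΨc, hΨΦ, hΦc]

/-- For `m = 1` and `k ≥ 1`, let `F ∈ ℚ[p,q]` be the polynomial (variable `0` is `p`,
variable `1` is `q`) with `F(p;q) = χ̂^{p×q}(k,1^{pq-k}) = -(1/k)[x^{-1}] (x)_k (x-(q+p))_k/(x-q)_k`,
and let `G` be its leading terms (the terms of total degree `k+1`). Then
`(-1)^k G(p;-q) = ∑_{i=1}^k N(k,i) p^{k+1-i} q^i`, where `N(k,i) = (1/k) binom(k,i) binom(k,i-1)`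
is a Narayana number. -/
theorem leading_terms_are_narayana (k : ℕ) (hk : 1 ≤ k) (F : MvPolynomial (Fin 2) ℚ)
    (hF : ∀ pv qv : ℚ,
      MvPolynomial.eval ![pv, qv] F
        = -(1 / (k : ℚ)) * coeffXinv
            (descPochhammer ℚ k *
              (descPochhammer ℚ k).comp (Polynomial.X - Polynomial.C (qv + pv)))
            ((descPochhammer ℚ k).comp (Polynomial.X - Polynomial.C qv))) :
    (-1 : ℚ) ^ k •
        MvPolynomial.bind₁ ![MvPolynomial.X 0, -MvPolynomial.X 1]
          (MvPolynomial.homogeneousComponent (k + 1) F)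
      = ∑ i ∈ Finset.Icc 1 k,
          MvPolynomial.C ((k.choose i : ℚ) * (k.choose (i - 1) : ℚ) / (k : ℚ))
            * MvPolynomial.X 0 ^ (k + 1 - i) * MvPolynomial.X 1 ^ i := by
  apply MvPolynomial.funext
  intro x
  set p := x 0 with hp
  set q := x 1 with hq
  have hbind : MvPolynomial.eval x
      (MvPolynomial.bind₁ ![MvPolynomial.X 0, -MvPolynomial.X 1]
        (MvPolynomial.homogeneousComponent (k + 1) F))
      = MvPolynomial.eval ![p, -q] (MvPolynomial.homogeneousComponent (k + 1) F) := by
    have h1 : MvPolynomial.eval x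
        (MvPolynomial.bind₁ ![MvPolynomial.X 0, -MvPolynomial.X 1]
          (MvPolynomial.homogeneousComponent (k + 1) F))
        = MvPolynomial.eval
            (fun i => MvPolynomial.eval x ((![MvPolynomial.X 0, -MvPolynomial.X 1] : Fin 2 → MvPolynomial ℕ ℚ) i))
            (MvPolynomial.homogeneousComponent (k + 1) F) :=
      MvPolynomial.eval₂Hom_bind₁ _ _ _ _
    have hfun : (fun i => MvPolynomial.eval x ((![MvPolynomial.X 0, -MvPolynomial.X 1] : Fin 2 → MvPolynomial ℕ ℚ) i)) = ![p, -q] := by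
      funext i
      fin_cases i <;> simp [hp, hq]
    rw [h1, hfun]
  rw [MvPolynomial.smul_eq_C_mul, map_mul, MvPolynomial.eval_C, hbind,
    main_scalar k hk F hF p q, map_sum]
  have hx : ∀ i ∈ Finset.Icc 1 k, MvPolynomial.eval x
      (MvPolynomial.C ((k.choose i : ℚ) * (k.choose (i - 1) : ℚ) / (k : ℚ))
        * MvPolynomial.X 0 ^ (k + 1 - i) * MvPolynomial.X 1 ^ i)
      = (k.choose i : ℚ) * (k.choose (i - 1) : ℚ) / (k : ℚ) * p ^ (k + 1 - i) * q ^ i := by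
    intro i _
    simp [hp, hq]
  rw [Finset.sum_congr rfl hx]
  rw [Finset.Nat.sum_antidiagonal_eq_sum_range_succ_mk]
  have hsub : ∑ a ∈ Finset.range (k + 2),
      (k.choose a : ℚ) * (k.choose (k + 1 - a) : ℚ) * q ^ a * p ^ (k + 1 - a)
      = ∑ a ∈ Finset.Icc 1 k,
          (k.choose a : ℚ) * (k.choose (k + 1 - a) : ℚ) * q ^ a * p ^ (k + 1 - a) := by
    symm
    apply Finset.sum_subset
    · intro a ha
      rw [Finset.mem_Icc] at ha
      rw [Finset.mem_range]
      omega
    · intro a ha hna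
      rw [Finset.mem_range] at ha
      rw [Finset.mem_Icc] at hna
      rcases (by omega : a = 0 ∨ a = k + 1) with h | h
      · subst h
        rw [Nat.sub_zero, show k.choose (k + 1) = 0 from Nat.choose_eq_zero_of_lt (by omega)]
        simp
      · subst h
        rw [show k.choose (k + 1) = 0 from Nat.choose_eq_zero_of_lt (by omega)]
        simp
  rw [hsub, Finset.mul_sum, Finset.mul_sum]
  apply Finset.sum_congr rfl
  intro a ha
  rw [Finset.mem_Icc] at ha
  have hc : (k.choose (k + 1 - a) : ℚ) = (k.choose (a - 1) : ℚ) := by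
    have h1 : k + 1 - a = k - (a - 1) := by omega
    rw [h1, Nat.choose_symm (by omega)]
  have hpow : (-1:ℚ)^k * ((-1:ℚ)^k / (k:ℚ)) = 1 / (k:ℚ) := by
    rw [← mul_div_assoc, ← pow_add, ← two_mul, pow_mul]
    norm_num
  rw [hc, ← mul_assoc, hpow]
  ring
end
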